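/- arXiv:1402.2715 — 2 statements merged into one kernel-verified Lean document; each statement's English description precedes it below -/
import Mathlib

section
/- In S△(2,2) over ℚ at q = 1 with λ = (2,0) and B = e_λ S△(2,2) e_λ, the right B-module e_λ S△(2,2) is free of rank 4 with basis {e_{E△_{1,1}+E△_{1,2}}, e_{E△_{1,2}+E△_{1,3}}, e_{2E△_{1,1}}, e_{2E△_{1,2}}}, and similarly S△(2,2) e_λ is free of rank 4 as a right B-module with basis {e_{E△_{1,1}+E△_{2,1}}, e_{E△_{2,1}+E△_{3,1}}, e_{2E△_{1,1}}, e_{2E△_{2,1}}}. -/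
noncomputable section

/-- The row vector `row(A) = (Σ_j a_{i,j})_i` of a `ℤ×ℤ` matrix with entries in `ℕ`. -/
def rowS (A : ℤ → ℤ → ℕ) (i : ℤ) : ℕ := ∑ᶠ j, A i j

/-- The column vector `col(A) = (Σ_i a_{i,j})_j`. -/
def colS (A : ℤ → ℤ → ℕ) (j : ℤ) : ℕ := ∑ᶠ i, A i j

/-- `Θ△(n,r)`: the set of `ℤ×ℤ` matrices over `ℕ` with `a_{i,j} = a_{i+n,j+n}`, finitely
many nonzero entries in each row and column, and total entry sum `r` over `n` consecutive
rows (equivalently columns). -/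
def ThetaAff (n r : ℕ) : Set (ℤ → ℤ → ℕ) :=
  {A | (∀ i j, A (i + n) (j + n) = A i j) ∧
       (∀ i, (Function.support (A i)).Finite) ∧
       (∀ j, (Function.support fun i => A i j).Finite) ∧
       (∑ i ∈ Finset.Icc (1 : ℤ) (n : ℤ), rowS A i) = r ∧
       (∑ j ∈ Finset.Icc (1 : ℤ) (n : ℤ), colS A j) = r}

/-- `Λ△(n,r)`: `n`-periodic sequences of natural numbers summing to `r` over a period. -/
def LambdaAff (n r : ℕ) : Set (ℤ → ℕ) :=
  {l | (∀ i, l (i + n) = l i) ∧ (∑ i ∈ Finset.Icc (1 : ℤ) (n : ℤ), l i) = r}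

/-- The diagonal matrix `diag(λ)` attached to `λ ∈ Λ△(n,r)`. -/
def diagM (l : ℤ → ℕ) : ℤ → ℤ → ℕ := fun i j => if i = j then l i else 0

/-- The `n`-periodic elementary matrix `E△_{i,j}`, with `1` at the positions
`(i + sn, j + sn)`, `s ∈ ℤ`. -/
def Edel (n : ℕ) (i j : ℤ) : ℤ → ℤ → ℕ :=
  fun x y => if x - i = y - j ∧ (n : ℤ) ∣ (x - i) then 1 else 0

/-- `Λ(∞, m)`: finitely supported sequences `t : ℤ → ℕ` with `Σ t = m`. -/
def CompInf (m : ℕ) : Set (ℤ → ℕ) :=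
  {t | (Function.support t).Finite ∧ ∑ᶠ u, t u = m}

/-- `A + Σ_u t_u (E△_{h,u} - E△_{h+1,u})`. -/
def rowAdd (n : ℕ) (h : ℤ) (t : ℤ → ℕ) (A : ℤ → ℤ → ℕ) : ℤ → ℤ → ℕ :=
  fun x y => A x y + (if (n : ℤ) ∣ (x - h) then t (y - x + h) else 0)
               - (if (n : ℤ) ∣ (x - (h + 1)) then t (y - x + (h + 1)) else 0)

/-- `A - Σ_u t_u (E△_{h,u} - E△_{h+1,u})`. -/
def rowSub (n : ℕ) (h : ℤ) (t : ℤ → ℕ) (A : ℤ → ℤ → ℕ) : ℤ → ℤ → ℕ :=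
  fun x y => A x y + (if (n : ℤ) ∣ (x - (h + 1)) then t (y - x + (h + 1)) else 0)
               - (if (n : ℤ) ∣ (x - h) then t (y - x + h) else 0)

/-- `A + Σ_u t_u (E△_{u,h+1} - E△_{u,h})`. -/
def colAdd (n : ℕ) (h : ℤ) (t : ℤ → ℕ) (A : ℤ → ℤ → ℕ) : ℤ → ℤ → ℕ :=
  fun x y => A x y + (if (n : ℤ) ∣ (y - (h + 1)) then t (x - y + (h + 1)) else 0)
               - (if (n : ℤ) ∣ (y - h) then t (x - y + h) else 0)

/-- `A - Σ_u t_u (E△_{u,h+1} - E△_{u,h})`. -/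
def colSub (n : ℕ) (h : ℤ) (t : ℤ → ℕ) (A : ℤ → ℤ → ℕ) : ℤ → ℤ → ℕ :=
  fun x y => A x y + (if (n : ℤ) ∣ (y - h) then t (x - y + h) else 0)
               - (if (n : ℤ) ∣ (y - (h + 1)) then t (x - y + (h + 1)) else 0)

/-- An algebra `S` realizing the affine Schur algebra `S△(n,r)` over `ℚ` at `q = 1`:
it has a basis `{e_A : A ∈ Θ△(n,r)}` whose structure constants vanish unless
`col(A) = row(A')`, diagonal basis elements act as partial identities, and the transpose
of matrices induces an involutory anti-automorphism `τ`. -/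
structure AffineSchurAlg (n r : ℕ) (S : Type) [Ring S] [Algebra ℚ S] where
  /-- the basis elements `e_A` (extended by `0` off `Θ△(n,r)`) -/
  e : (ℤ → ℤ → ℕ) → S
  indep : LinearIndependent ℚ (fun A : ThetaAff n r => e A.1)
  span_eq_top : Submodule.span ℚ (e '' ThetaAff n r) = ⊤
  vanish : ∀ A, A ∉ ThetaAff n r → e A = 0
  mul_disjoint : ∀ A B, A ∈ ThetaAff n r → B ∈ ThetaAff n r →
    colS A ≠ rowS B → e A * e B = 0
  diag_row : ∀ A ∈ ThetaAff n r, e (diagM (rowS A)) * e A = e A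
  diag_col : ∀ A ∈ ThetaAff n r, e A * e (diagM (colS A)) = e A
  /-- the anti-involution `e_A ↦ e_{Aᵀ}` -/
  tau : S →ₗ[ℚ] S
  tau_mul : ∀ a b : S, tau (a * b) = tau b * tau a
  tau_invol : ∀ a : S, tau (tau a) = a
  tau_e : ∀ A, tau (e A) = e (fun x y => A y x)

/-- An algebra realizing the affine Schur algebra `S△(2,2)` over `ℚ` at `q = 1`,
together with the multiplication formulas of Lusztig and of Du–Deng–Fu
(Propositions 2.5, 2.6, 2.7 of the paper, for `n = 2`), and the shift formulas
(multiplication by `e_{2E△_{1,3}}` and `e_{2E△_{3,1}}`) coming from the Hecke-algebra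
description. -/
structure AffineSchur22 (S : Type) [Ring S] [Algebra ℚ S] extends
    AffineSchurAlg 2 2 S where
  /-- Proposition 2.5(1): multiplication by `e_{B_m}`,
  `B_m = diag(λ) + m E△_{h,h+1} - m E△_{h+1,h+1}`, `λ = row(A)`. -/
  lusztig_row_plus : ∀ (h : ℤ) (m : ℕ), ∀ A ∈ ThetaAff 2 2, m ≤ rowS A (h + 1) →
    e (fun x y => diagM (rowS A) x y + m * Edel 2 h (h + 1) x y
        - m * Edel 2 (h + 1) (h + 1) x y) * e A
      = ∑ᶠ t ∈ {t | t ∈ CompInf m ∧ ∀ u, t u ≤ A (h + 1) u},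
          ((∏ᶠ u, Nat.choose (A h u + t u) (t u) : ℕ) : ℚ) • e (rowAdd 2 h t A)
  /-- Proposition 2.5(2): multiplication by `e_{C_m}`,
  `C_m = diag(λ) - m E△_{h,h} + m E△_{h+1,h}`, `λ = row(A)`. -/
  lusztig_row_minus : ∀ (h : ℤ) (m : ℕ), ∀ A ∈ ThetaAff 2 2, m ≤ rowS A h →
    e (fun x y => diagM (rowS A) x y - m * Edel 2 h h x y
        + m * Edel 2 (h + 1) h x y) * e A
      = ∑ᶠ t ∈ {t | t ∈ CompInf m ∧ ∀ u, t u ≤ A h u},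
          ((∏ᶠ u, Nat.choose (A (h + 1) u + t u) (t u) : ℕ) : ℚ) • e (rowSub 2 h t A)
  /-- Proposition 2.6(1): right multiplication by `e_{B_m}`,
  `B_m = diag(λ) + m E△_{h,h+1} - m E△_{h,h}`, `λ = col(A)`. -/
  lusztig_col_plus : ∀ (h : ℤ) (m : ℕ), ∀ A ∈ ThetaAff 2 2, m ≤ colS A h →
    e A * e (fun x y => diagM (colS A) x y + m * Edel 2 h (h + 1) x y
        - m * Edel 2 h h x y)
      = ∑ᶠ t ∈ {t | t ∈ CompInf m ∧ ∀ u, t u ≤ A u h},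
          ((∏ᶠ u, Nat.choose (A u (h + 1) + t u) (t u) : ℕ) : ℚ) • e (colAdd 2 h t A)
  /-- Proposition 2.6(2): right multiplication by `e_{C_m}`,
  `C_m = diag(λ) - m E△_{h+1,h+1} + m E△_{h+1,h}`, `λ = col(A)`. -/
  lusztig_col_minus : ∀ (h : ℤ) (m : ℕ), ∀ A ∈ ThetaAff 2 2, m ≤ colS A (h + 1) →
    e A * e (fun x y => diagM (colS A) x y - m * Edel 2 (h + 1) (h + 1) x y
        + m * Edel 2 (h + 1) h x y)
      = ∑ᶠ t ∈ {t | t ∈ CompInf m ∧ ∀ u, t u ≤ A u (h + 1)},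
          ((∏ᶠ u, Nat.choose (A u h + t u) (t u) : ℕ) : ℚ) • e (colSub 2 h t A)
  /-- Proposition 2.7: multiplication by `e_{D_m}`,
  `D_m = diag(λ) - E△_{h,h} + E△_{h,h+mn}`, `λ = row(A)`, `m ≠ 0`. -/
  lusztig_shift : ∀ (h : ℤ) (m : ℤ), m ≠ 0 → ∀ A ∈ ThetaAff 2 2, 1 ≤ rowS A h →
    e (fun x y => diagM (rowS A) x y - Edel 2 h h x y + Edel 2 h (h + 2 * m) x y) * e A
      = ∑ᶠ u ∈ {u : ℤ | 1 ≤ A h u},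
          ((A h (u + 2 * m) + 1 : ℕ) : ℚ) •
            e (fun x y => A x y + Edel 2 h (u + 2 * m) x y - Edel 2 h u x y)
  /-- multiplication by `e_{2E△_{1,3}}` shifts both column indices by `2`
  (Proposition 2.8 of the paper). -/
  x2_shift : ∀ i j : ℤ,
    e (fun x y => 2 * Edel 2 1 3 x y) * e (fun x y => Edel 2 1 i x y + Edel 2 1 j x y)
      = e (fun x y => Edel 2 1 (i + 2) x y + Edel 2 1 (j + 2) x y)
  /-- multiplication by `e_{2E△_{3,1}}` shifts both column indices by `-2`. -/
  x2inv_shift : ∀ i j : ℤ,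
    e (fun x y => 2 * Edel 2 3 1 x y) * e (fun x y => Edel 2 1 i x y + Edel 2 1 j x y)
      = e (fun x y => Edel 2 1 (i - 2) x y + Edel 2 1 (j - 2) x y)

/-- The weight `λ = (2,0) ∈ Λ△(2,2)`. -/
def lam0 : ℤ → ℕ := fun i => if (2 : ℤ) ∣ (i - 1) then 2 else 0

/-- The weight `μ = (0,2) ∈ Λ△(2,2)`. -/
def mu0 : ℤ → ℕ := fun i => if (2 : ℤ) ∣ (i - 2) then 2 else 0

/-- The weight `ν = (1,1) ∈ Λ△(2,2)`. -/
def nu0 : ℤ → ℕ := fun _ => 1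

/-- The matrix `E△_{i,j} + E△_{k,l}` (for `n = 2`). -/
def Mat2 (i j k l : ℤ) : ℤ → ℤ → ℕ := fun x y => Edel 2 i j x y + Edel 2 k l x y

end
noncomputable section AuxSec
open Function

lemma cast2 : ((2:ℕ):ℤ) = 2 := rfl

lemma Mat2_comm (i j : ℤ) : Mat2 1 i 1 j = Mat2 1 j 1 i := by
  funext x y; simp only [Mat2]; omega

lemma Edel_period (a i x y : ℤ) : Edel 2 a i (x+2) (y+2) = Edel 2 a i x y := by
  simp only [Edel, cast2]
  split_ifs with h1 h2 h2 <;> omega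

lemma support_row_Edel (a i x : ℤ) :
    (Function.support (fun y => Edel 2 a i x y)).Finite := by
  apply Set.Finite.subset (Set.finite_singleton (x - a + i))
  intro y hy
  simp only [Function.mem_support, Edel, cast2, ne_eq, ite_eq_right_iff, not_forall] at hy
  obtain ⟨⟨h1, h2⟩, -⟩ := hy
  simp; omega

lemma support_col_Edel (a i k : ℤ) :
    (Function.support (fun x => Edel 2 a i x k)).Finite := by
  apply Set.Finite.subset (Set.finite_singleton (k - i + a))
  intro y hy
  simp only [Function.mem_support, Edel, cast2, ne_eq, ite_eq_right_iff, not_forall] at hy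
  obtain ⟨⟨h1, h2⟩, -⟩ := hy
  simp; omega

lemma row_Edel (a i x : ℤ) : ∑ᶠ y, Edel 2 a i x y = if (2:ℤ) ∣ (x-a) then 1 else 0 := by
  by_cases h : (2:ℤ) ∣ (x-a)
  · rw [if_pos h, finsum_eq_single _ (x - a + i)]
    · simp only [Edel, cast2]; rw [if_pos ⟨by ring, h⟩]
    · intro y hy; simp only [Edel, cast2]; rw [if_neg]; rintro ⟨h1, -⟩; exact hy (by omega)
  · rw [if_neg h]
    have h0 : (fun y => Edel 2 a i x y) = fun _ => (0:ℕ) := by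
      funext y; simp only [Edel, cast2]; rw [if_neg]; rintro ⟨-, h2⟩; exact h h2
    rw [h0, finsum_zero]

lemma col_Edel (a i k : ℤ) : ∑ᶠ x, Edel 2 a i x k = if (2:ℤ) ∣ (k-i) then 1 else 0 := by
  by_cases h : (2:ℤ) ∣ (k-i)
  · rw [if_pos h, finsum_eq_single _ (k - i + a)]
    · simp only [Edel, cast2]; rw [if_pos ⟨by ring, by omega⟩]
    · intro y hy; simp only [Edel, cast2]; rw [if_neg]; rintro ⟨h1, -⟩; exact hy (by omega)
  · rw [if_neg h]
    have h0 : (fun x => Edel 2 a i x k) = fun _ => (0:ℕ) := by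
      funext y; simp only [Edel, cast2]; rw [if_neg]; rintro ⟨h1, h2⟩; exact h (by omega)
    rw [h0, finsum_zero]

lemma rowS_Mat2 (p i q j : ℤ) : rowS (Mat2 p i q j)
    = fun x => (if (2:ℤ) ∣ (x-p) then 1 else 0) + (if (2:ℤ) ∣ (x-q) then 1 else 0) := by
  funext x
  simp only [rowS, Mat2]
  rw [finsum_add_distrib (support_row_Edel p i x) (support_row_Edel q j x),
    row_Edel, row_Edel]

lemma colS_Mat2 (p i q j : ℤ) : colS (Mat2 p i q j)
    = fun k => (if (2:ℤ) ∣ (k-i) then 1 else 0) + (if (2:ℤ) ∣ (k-j) then 1 else 0) := by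
  funext k
  simp only [colS, Mat2]
  rw [finsum_add_distrib (support_col_Edel p i k) (support_col_Edel q j k),
    col_Edel, col_Edel]

lemma Icc12 : Finset.Icc (1:ℤ) ((2:ℕ):ℤ) = {1, 2} := rfl

lemma mem_Theta (p i q j : ℤ) : Mat2 p i q j ∈ ThetaAff 2 2 := by
  refine ⟨fun x y => ?_, fun x => ?_, fun k => ?_, ?_, ?_⟩
  · simp only [cast2, Mat2, Edel_period]
  · exact ((support_row_Edel p i x).union (support_row_Edel q j x)).subset
      (fun y hy => by
        simp only [Function.mem_support, Mat2] at hy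
        simp only [Set.mem_union, Function.mem_support]; omega)
  · exact ((support_col_Edel p i k).union (support_col_Edel q j k)).subset
      (fun y hy => by
        simp only [Function.mem_support, Mat2] at hy
        simp only [Set.mem_union, Function.mem_support]; omega)
  · rw [Icc12, rowS_Mat2]
    rw [Finset.sum_insert (by decide), Finset.sum_singleton]
    split_ifs <;> omega
  · rw [Icc12, colS_Mat2]
    rw [Finset.sum_insert (by decide), Finset.sum_singleton]
    split_ifs <;> omega

lemma rowS_Mat2_lam0 (i j : ℤ) : rowS (Mat2 1 i 1 j) = lam0 := by
  rw [rowS_Mat2]; funext x; simp only [lam0]; split_ifs <;> omega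

lemma colS_Mat2_lam0 (i j : ℤ) (hi : (2:ℤ) ∣ (i-1)) (hj : (2:ℤ) ∣ (j-1)) :
    colS (Mat2 1 i 1 j) = lam0 := by
  rw [colS_Mat2]; funext k; simp only [lam0]; split_ifs <;> omega
def dl (p : ℤ) : ℤ → ℕ := fun u => if u = p then 1 else 0

lemma dl_supp (p : ℤ) : (Function.support (dl p)).Finite := by
  apply Set.Finite.subset (Set.finite_singleton p)
  intro u hu
  simp only [Function.mem_support, dl, ne_eq, ite_eq_right_iff, not_forall] at hu
  simp [hu.1]

lemma dl_finsum (p : ℤ) : ∑ᶠ u, dl p u = 1 := by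
  rw [finsum_eq_single _ p]
  · simp [dl]
  · intro x hx; simp [dl, hx]

lemma dl_mem (p : ℤ) : dl p ∈ CompInf 1 := ⟨dl_supp p, dl_finsum p⟩

lemma compinf_one {t : ℤ → ℕ} (ht : t ∈ CompInf 1) : ∃ p, t = dl p ∧ t p = 1 := by
  obtain ⟨hfin, hs⟩ := ht
  rw [finsum_eq_sum t hfin] at hs
  have hmem : ∀ x, x ∈ hfin.toFinset ↔ t x ≠ 0 := by
    intro x; rw [Set.Finite.mem_toFinset]; exact Iff.rfl
  have hcard : hfin.toFinset.card ≤ 1 := by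
    calc hfin.toFinset.card = ∑ x ∈ hfin.toFinset, 1 := by rw [Finset.card_eq_sum_ones]
    _ ≤ ∑ x ∈ hfin.toFinset, t x :=
        Finset.sum_le_sum (fun x hx => by have := (hmem x).1 hx; omega)
    _ = 1 := hs
  have hne : hfin.toFinset ≠ ∅ := by
    intro h0; rw [h0] at hs; simp at hs
  have hcard1 : hfin.toFinset.card = 1 := by
    have := Finset.card_ne_zero_of_mem (Finset.nonempty_of_ne_empty hne).choose_spec
    omega
  obtain ⟨p, hp⟩ := Finset.card_eq_one.1 hcard1
  rw [hp, Finset.sum_singleton] at hs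
  refine ⟨p, ?_, hs⟩
  funext u
  by_cases hu : u = p
  · rw [hu, hs]; simp [dl]
  · have : u ∉ hfin.toFinset := by rw [hp]; simp [hu]
    rw [hmem] at this; push_neg at this
    simp [dl, hu, this]

lemma eq_of_le_finsum {t g : ℤ → ℕ} (hg : (Function.support g).Finite)
    (hle : ∀ u, t u ≤ g u) (hsum : ∑ᶠ u, t u = ∑ᶠ u, g u) : t = g := by
  have hsub : Function.support t ⊆ Function.support g := by
    intro u hu; simp only [Function.mem_support] at hu ⊢
    have := hle u; omega
  rw [finsum_eq_sum g hg, finsum_eq_sum_of_support_subset t (s := hg.toFinset)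
    (fun u hu => by simp only [Finset.coe_sort_coe, Finset.mem_coe, Set.Finite.mem_toFinset]; exact hsub hu)] at hsum
  by_contra hne
  have : ∃ u, t u ≠ g u := by
    by_contra hh; push_neg at hh; exact hne (funext hh)
  obtain ⟨u, hu⟩ := this
  have hlt : t u < g u := lt_of_le_of_ne (hle u) hu
  have hus : u ∈ hg.toFinset := by
    rw [Set.Finite.mem_toFinset, Function.mem_support]; omega
  exact absurd hsum (ne_of_lt (Finset.sum_lt_sum (fun i _ => hle i) ⟨u, hus, hlt⟩))

lemma diag_lam0 : diagM lam0 = Mat2 1 1 1 1 := by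
  funext x y
  simp only [diagM, Mat2, Edel, cast2, lam0]
  split_ifs <;> omega

lemma twoE (i j : ℤ) : (fun x y => 2 * Edel 2 i j x y) = Mat2 i j i j := by
  funext x y; simp only [Mat2]; ring

lemma rowS_diag (l : ℤ → ℕ) : rowS (diagM l) = l := by
  funext x
  rw [show rowS (diagM l) x = ∑ᶠ y, diagM l x y from rfl, finsum_eq_single _ x]
  · simp [diagM]
  · intro y hy; simp [diagM, Ne.symm hy]

lemma colS_diag (l : ℤ → ℕ) : colS (diagM l) = l := by
  funext k
  rw [show colS (diagM l) k = ∑ᶠ x, diagM l x k from rfl, finsum_eq_single _ k]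
  · simp [diagM]
  · intro y hy; simp [diagM, hy]

lemma Mat2_at1 (p q y : ℤ) :
    Mat2 1 p 1 q 1 y = (if y = p then 1 else 0) + (if y = q then 1 else 0) := by
  simp only [Mat2, Edel, cast2]
  split_ifs <;> omega

lemma Mat2_eq_iff {p q r s : ℤ} :
    Mat2 1 p 1 q = Mat2 1 r 1 s ↔ (p = r ∧ q = s) ∨ (p = s ∧ q = r) := by
  constructor
  · intro h
    have hv : ∀ y, ((if y = p then 1 else 0) + (if y = q then 1 else 0) : ℕ)
        = (if y = r then 1 else 0) + (if y = s then 1 else 0) := by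
      intro y
      have := congrFun (congrFun h 1) y
      rwa [Mat2_at1, Mat2_at1] at this
    by_cases hpr : p = r
    · subst hpr
      have h2 := hv q
      by_cases hqs : q = s
      · exact Or.inl ⟨rfl, hqs⟩
      · exfalso
        rw [if_pos rfl, if_neg hqs] at h2
        by_cases hqp : q = p <;> simp [hqp] at h2
    · have h1 := hv p
      rw [if_pos rfl, if_neg hpr] at h1
      by_cases hps : p = s
      · have h3 := hv r
        rw [if_neg (Ne.symm hpr), if_pos rfl] at h3
        by_cases hrq : r = q
        · exact Or.inr ⟨hps, hrq.symm⟩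
        · exfalso; rw [if_neg hrq] at h3; split_ifs at h3 <;> omega
      · exfalso; rw [if_neg hps] at h1; split_ifs at h1 <;> omega
  · rintro (⟨rfl, rfl⟩ | ⟨rfl, rfl⟩)
    · rfl
    · exact Mat2_comm _ _

lemma shiftA {A : ℤ → ℤ → ℕ} (hA : A ∈ ThetaAff 2 2) :
    ∀ (k x y : ℤ), A (x + 2*k) (y + 2*k) = A x y := by
  have h1 : ∀ i j, A (i+2) (j+2) = A i j := by
    intro i j; have := (show (∀ i j, A (i + ((2:ℕ):ℤ)) (j + ((2:ℕ):ℤ)) = A i j) ∧ _ from hA).1 i j; rwa [cast2] at this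
  intro k
  induction k using Int.induction_on with
  | zero => simp
  | succ n ih =>
      intro x y
      have e := h1 (x + 2*n) (y + 2*n)
      rw [show x + 2*n + 2 = x + 2*(n+1) by ring, show y + 2*n + 2 = y + 2*(n+1) by ring]
        at e
      rw [e]; exact ih x y
  | pred n ih =>
      intro x y
      have e := h1 (x + 2*(-(n:ℤ)-1)) (y + 2*(-(n:ℤ)-1))
      rw [show x + 2*(-(n:ℤ)-1) + 2 = x + 2*(-(n:ℤ)) by ring,
          show y + 2*(-(n:ℤ)-1) + 2 = y + 2*(-(n:ℤ)) by ring] at e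
      calc A (x + 2*(-(n:ℤ)-1)) (y + 2*(-(n:ℤ)-1))
          = A (x + 2*(-(n:ℤ))) (y + 2*(-(n:ℤ))) := e.symm
        _ = A x y := ih x y

lemma finsum_zero_all {f : ℤ → ℕ} (hf : (Function.support f).Finite)
    (h : ∑ᶠ x, f x = 0) : ∀ x, f x = 0 := by
  intro x
  by_contra hx
  rw [finsum_eq_sum f hf] at h
  have hxs : x ∈ hf.toFinset := by rw [Set.Finite.mem_toFinset]; exact hx
  exact hx (Finset.sum_eq_zero_iff.1 h x hxs)

lemma sum_two {f : ℤ → ℕ} (hf : (Function.support f).Finite)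
    (h : ∑ᶠ x, f x = 2) : ∃ i j, f = fun y => dl i y + dl j y := by
  rw [finsum_eq_sum f hf] at h
  have hmem : ∀ x, x ∈ hf.toFinset ↔ f x ≠ 0 := by
    intro x; rw [Set.Finite.mem_toFinset]; exact Iff.rfl
  have hcard : hf.toFinset.card ≤ 2 := by
    calc hf.toFinset.card = ∑ x ∈ hf.toFinset, 1 := by rw [Finset.card_eq_sum_ones]
    _ ≤ ∑ x ∈ hf.toFinset, f x :=
        Finset.sum_le_sum (fun x hx => by have := (hmem x).1 hx; omega)
    _ = 2 := h
  have h3 : hf.toFinset.card = 0 ∨ hf.toFinset.card = 1 ∨ hf.toFinset.card = 2 := by omega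
  rcases h3 with h0 | h1 | h2
  · exfalso
    rw [Finset.card_eq_zero.1 h0] at h; simp at h
  · obtain ⟨p, hp⟩ := Finset.card_eq_one.1 h1
    rw [hp, Finset.sum_singleton] at h
    refine ⟨p, p, funext fun y => ?_⟩
    by_cases hy : y = p
    · rw [hy, h]; simp [dl]
    · have : y ∉ hf.toFinset := by rw [hp]; simp [hy]
      rw [hmem] at this; push_neg at this
      simp [dl, hy, this]
  · obtain ⟨p, q, hpq, hs⟩ := Finset.card_eq_two.1 h2
    rw [hs, Finset.sum_insert (by simp [hpq]), Finset.sum_singleton] at h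
    have hp1 : f p ≠ 0 := (hmem p).1 (by rw [hs]; simp)
    have hq1 : f q ≠ 0 := (hmem q).1 (by rw [hs]; simp)
    refine ⟨p, q, funext fun y => ?_⟩
    by_cases hyp : y = p
    · subst hyp; simp [dl, hpq]; omega
    · by_cases hyq : y = q
      · subst hyq; simp [dl, Ne.symm hpq, hyp]; omega
      · have : y ∉ hf.toFinset := by rw [hs]; simp [hyp, hyq]
        rw [hmem] at this; push_neg at this
        simp [dl, hyp, hyq, this]

lemma classify_row {A : ℤ → ℤ → ℕ} (hA : A ∈ ThetaAff 2 2) (hrow : rowS A = lam0) :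
    ∃ i j, A = Mat2 1 i 1 j := by
  have hsh := shiftA hA
  have h2 : ∀ y, A 2 y = 0 := by
    apply finsum_zero_all (hA.2.1 2)
    have := congrFun hrow 2
    simpa [rowS, lam0] using this
  have h1 : ∑ᶠ y, A 1 y = 2 := by
    have := congrFun hrow 1
    simpa [rowS, lam0] using this
  obtain ⟨i, j, hf⟩ := sum_two (hA.2.1 1) h1
  refine ⟨i, j, ?_⟩
  funext x y
  rcases Int.even_or_odd x with ⟨k, hk⟩ | ⟨k, hk⟩
  · have e1 : A x y = A 2 (y - x + 2) := by
      have h := hsh (k-1) 2 (y-x+2)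
      rw [show (2:ℤ) + 2*(k-1) = x by omega, show (y-x+2) + 2*(k-1) = y by omega] at h
      exact h
    rw [e1, h2]
    simp only [Mat2, Edel, cast2]
    rw [if_neg, if_neg] <;> omega
  · have e1 : A x y = A 1 (y - x + 1) := by
      have h := hsh k 1 (y-x+1)
      rw [show (1:ℤ) + 2*k = x by omega, show (y-x+1) + 2*k = y by omega] at h
      exact h
    rw [e1, hf]
    simp only [Mat2, Edel, dl, cast2]
    split_ifs <;> omega

lemma classify_B {A : ℤ → ℤ → ℕ} (hA : A ∈ ThetaAff 2 2) (hrow : rowS A = lam0)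
    (hcol : colS A = lam0) :
    ∃ a c, (2:ℤ) ∣ (a-1) ∧ (2:ℤ) ∣ (c-1) ∧ A = Mat2 1 a 1 c := by
  obtain ⟨i, j, rfl⟩ := classify_row hA hrow
  rw [colS_Mat2] at hcol
  refine ⟨i, j, ?_, ?_, rfl⟩
  · by_contra hodd
    have := congrFun hcol i
    simp only [lam0] at this
    split_ifs at this <;> omega
  · by_contra hodd
    have := congrFun hcol j
    simp only [lam0] at this
    split_ifs at this <;> omega
section Products
variable {S : Type} [Ring S] [Algebra ℚ S] (H : AffineSchur22 S)

lemma diag_mem : diagM lam0 ∈ ThetaAff 2 2 := by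
  rw [diag_lam0]; exact mem_Theta 1 1 1 1

lemma elam_idem : H.e (diagM lam0) * H.e (diagM lam0) = H.e (diagM lam0) := by
  have h := H.diag_row (diagM lam0) diag_mem
  rwa [rowS_diag] at h

lemma elam_e (i j : ℤ) :
    H.e (diagM lam0) * H.e (Mat2 1 i 1 j) = H.e (Mat2 1 i 1 j) := by
  have h := H.diag_row (Mat2 1 i 1 j) (mem_Theta 1 i 1 j)
  rwa [rowS_Mat2_lam0] at h

lemma e_elam (i j : ℤ) (hi : (2:ℤ) ∣ (i-1)) (hj : (2:ℤ) ∣ (j-1)) :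
    H.e (Mat2 1 i 1 j) * H.e (diagM lam0) = H.e (Mat2 1 i 1 j) := by
  have h := H.diag_col (Mat2 1 i 1 j) (mem_Theta 1 i 1 j)
  rwa [colS_Mat2_lam0 i j hi hj] at h

lemma e_sandwich (i j : ℤ) (hi : (2:ℤ) ∣ (i-1)) (hj : (2:ℤ) ∣ (j-1)) :
    H.e (diagM lam0) * H.e (Mat2 1 i 1 j) * H.e (diagM lam0) = H.e (Mat2 1 i 1 j) := by
  rw [elam_e, e_elam _ i j hi hj]

lemma Mat2_col1 (a c : ℤ) (ha : (2:ℤ) ∣ (a-1)) (hc : (2:ℤ) ∣ (c-1)) :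
    (fun u => Mat2 1 a 1 c u 1) = fun u => dl (2-a) u + dl (2-c) u := by
  funext u; simp only [Mat2, Edel, dl, cast2]; split_ifs <;> omega

lemma Mat2_col2 (a c u : ℤ) (ha : (2:ℤ) ∣ (a-1)) (hc : (2:ℤ) ∣ (c-1)) :
    Mat2 1 a 1 c u (1+1) = 0 := by
  simp only [Mat2, Edel, cast2]; split_ifs <;> omega

lemma Mat2_col3 (a c : ℤ) (ha : (2:ℤ) ∣ (a-1)) (hc : (2:ℤ) ∣ (c-1)) :
    (fun u => Mat2 1 a 1 c u (2+1)) = fun u => dl (4-a) u + dl (4-c) u := by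
  funext u; simp only [Mat2, Edel, dl, cast2]; split_ifs <;> omega

lemma coeff_one (a c : ℤ) (ha : (2:ℤ) ∣ (a-1)) (hc : (2:ℤ) ∣ (c-1)) (t : ℤ → ℕ) :
    ((∏ᶠ u, Nat.choose (Mat2 1 a 1 c u (1+1) + t u) (t u) : ℕ) : ℚ) = 1 := by
  rw [finprod_eq_one_of_forall_eq_one (fun u => by
    rw [Mat2_col2 a c u ha hc, zero_add, Nat.choose_self])]
  norm_num

/-- P1, distinct case: `e_{(a,c)} π₁ = e_{(a+1,c)} + e_{(a,c+1)}` for `a ≠ c` odd. -/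
lemma P1ne (a c : ℤ) (ha : (2:ℤ) ∣ (a-1)) (hc : (2:ℤ) ∣ (c-1)) (hne : a ≠ c) :
    H.e (Mat2 1 a 1 c) * H.e (Mat2 1 1 1 2)
      = H.e (Mat2 1 (a+1) 1 c) + H.e (Mat2 1 a 1 (c+1)) := by
  have hcol := colS_Mat2_lam0 a c ha hc
  have key := H.lusztig_col_plus 1 1 (Mat2 1 a 1 c) (mem_Theta 1 a 1 c)
    (by rw [hcol]; simp [lam0])
  have hgen : (fun x y => diagM (colS (Mat2 1 a 1 c)) x y + 1 * Edel 2 1 (1+1) x y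
      - 1 * Edel 2 1 1 x y) = Mat2 1 1 1 2 := by
    rw [hcol]; funext x y
    simp only [diagM, Mat2, Edel, cast2, lam0, one_mul]
    split_ifs <;> omega
  rw [hgen] at key
  have hset : {t | t ∈ CompInf 1 ∧ ∀ u, t u ≤ Mat2 1 a 1 c u 1}
      = ({dl (2-a), dl (2-c)} : Set (ℤ → ℕ)) := by
    ext t
    simp only [Set.mem_setOf_eq, Set.mem_insert_iff, Set.mem_singleton_iff]
    constructor
    · rintro ⟨ht1, ht2⟩
      obtain ⟨p, rfl, hp1⟩ := compinf_one ht1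
      have h := ht2 p
      rw [congrFun (Mat2_col1 a c ha hc) p, hp1] at h
      simp only [dl] at h
      split_ifs at h with h1 h2 h2
      · omega
      · exact Or.inl (by rw [h1])
      · exact Or.inr (by rw [h2])
      · omega
    · rintro (rfl | rfl) <;>
        exact ⟨dl_mem _, fun u => by
          rw [congrFun (Mat2_col1 a c ha hc) u]; simp only [dl]; split_ifs <;> omega⟩
  have hdlne : dl (2-a) ≠ dl (2-c) := by
    intro h
    have := congrFun h (2-a)
    simp only [dl, if_pos rfl] at this
    split_ifs at this <;> omega
  have hA1 : colAdd 2 1 (dl (2-a)) (Mat2 1 a 1 c) = Mat2 1 (a+1) 1 c := by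
    funext x y
    simp only [colAdd, Mat2, Edel, dl, cast2]
    split_ifs <;> omega
  have hA2 : colAdd 2 1 (dl (2-c)) (Mat2 1 a 1 c) = Mat2 1 a 1 (c+1) := by
    funext x y
    simp only [colAdd, Mat2, Edel, dl, cast2]
    split_ifs <;> omega
  rw [key, hset, finsum_mem_pair hdlne, coeff_one _ _ ha hc, coeff_one _ _ ha hc,
    hA1, hA2, one_smul, one_smul]

/-- P1, equal case: `e_{(a,a)} π₁ = e_{(a+1,a)}`. -/
lemma P1eq (a : ℤ) (ha : (2:ℤ) ∣ (a-1)) :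
    H.e (Mat2 1 a 1 a) * H.e (Mat2 1 1 1 2) = H.e (Mat2 1 (a+1) 1 a) := by
  have hcol := colS_Mat2_lam0 a a ha ha
  have key := H.lusztig_col_plus 1 1 (Mat2 1 a 1 a) (mem_Theta 1 a 1 a)
    (by rw [hcol]; simp [lam0])
  have hgen : (fun x y => diagM (colS (Mat2 1 a 1 a)) x y + 1 * Edel 2 1 (1+1) x y
      - 1 * Edel 2 1 1 x y) = Mat2 1 1 1 2 := by
    rw [hcol]; funext x y
    simp only [diagM, Mat2, Edel, cast2, lam0, one_mul]
    split_ifs <;> omega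
  rw [hgen] at key
  have hset : {t | t ∈ CompInf 1 ∧ ∀ u, t u ≤ Mat2 1 a 1 a u 1}
      = ({dl (2-a)} : Set (ℤ → ℕ)) := by
    ext t
    simp only [Set.mem_setOf_eq, Set.mem_singleton_iff]
    constructor
    · rintro ⟨ht1, ht2⟩
      obtain ⟨p, rfl, hp1⟩ := compinf_one ht1
      have h := ht2 p
      rw [congrFun (Mat2_col1 a a ha ha) p, hp1] at h
      simp only [dl] at h
      split_ifs at h with h1
      · rw [h1]
      · omega
    · rintro rfl
      exact ⟨dl_mem _, fun u => by
        rw [congrFun (Mat2_col1 a a ha ha) u]; simp only [dl]; split_ifs <;> omega⟩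
  have hA1 : colAdd 2 1 (dl (2-a)) (Mat2 1 a 1 a) = Mat2 1 (a+1) 1 a := by
    funext x y
    simp only [colAdd, Mat2, Edel, dl, cast2]
    split_ifs <;> omega
  rw [key, hset, finsum_mem_singleton, coeff_one _ _ ha ha, hA1, one_smul]

/-- P2, distinct case: `e_{(a,c)} e_w = e_{(a-1,c)} + e_{(a,c-1)}`, `w = E_{1,1}+E_{1,0}`. -/
lemma P2ne (a c : ℤ) (ha : (2:ℤ) ∣ (a-1)) (hc : (2:ℤ) ∣ (c-1)) (hne : a ≠ c) :
    H.e (Mat2 1 a 1 c) * H.e (Mat2 1 1 1 0)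
      = H.e (Mat2 1 (a-1) 1 c) + H.e (Mat2 1 a 1 (c-1)) := by
  have hcol := colS_Mat2_lam0 a c ha hc
  have key := H.lusztig_col_minus 2 1 (Mat2 1 a 1 c) (mem_Theta 1 a 1 c)
    (by rw [hcol]; simp [lam0])
  have hgen : (fun x y => diagM (colS (Mat2 1 a 1 c)) x y - 1 * Edel 2 (2+1) (2+1) x y
      + 1 * Edel 2 (2+1) 2 x y) = Mat2 1 1 1 0 := by
    rw [hcol]; funext x y
    simp only [diagM, Mat2, Edel, cast2, lam0, one_mul]
    split_ifs <;> omega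
  rw [hgen] at key
  have hset : {t | t ∈ CompInf 1 ∧ ∀ u, t u ≤ Mat2 1 a 1 c u (2+1)}
      = ({dl (4-a), dl (4-c)} : Set (ℤ → ℕ)) := by
    ext t
    simp only [Set.mem_setOf_eq, Set.mem_insert_iff, Set.mem_singleton_iff]
    constructor
    · rintro ⟨ht1, ht2⟩
      obtain ⟨p, rfl, hp1⟩ := compinf_one ht1
      have h := ht2 p
      rw [congrFun (Mat2_col3 a c ha hc) p, hp1] at h
      simp only [dl] at h
      split_ifs at h with h1 h2 h2
      · omega
      · exact Or.inl (by rw [h1])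
      · exact Or.inr (by rw [h2])
      · omega
    · rintro (rfl | rfl) <;>
        exact ⟨dl_mem _, fun u => by
          rw [congrFun (Mat2_col3 a c ha hc) u]; simp only [dl]; split_ifs <;> omega⟩
  have hdlne : dl (4-a) ≠ dl (4-c) := by
    intro h
    have := congrFun h (4-a)
    simp only [dl, if_pos rfl] at this
    split_ifs at this <;> omega
  have hco : ∀ t : ℤ → ℕ,
      ((∏ᶠ u, Nat.choose (Mat2 1 a 1 c u 2 + t u) (t u) : ℕ) : ℚ) = 1 := by
    intro t
    rw [finprod_eq_one_of_forall_eq_one (fun u => by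
      have h2 : Mat2 1 a 1 c u 2 = 0 := by
        have := Mat2_col2 a c u ha hc
        rwa [show (1:ℤ)+1 = 2 by norm_num] at this
      rw [h2, zero_add, Nat.choose_self])]
    norm_num
  have hA1 : colSub 2 2 (dl (4-a)) (Mat2 1 a 1 c) = Mat2 1 (a-1) 1 c := by
    funext x y
    simp only [colSub, Mat2, Edel, dl, cast2]
    split_ifs <;> omega
  have hA2 : colSub 2 2 (dl (4-c)) (Mat2 1 a 1 c) = Mat2 1 a 1 (c-1) := by
    funext x y
    simp only [colSub, Mat2, Edel, dl, cast2]
    split_ifs <;> omega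
  rw [key, hset, finsum_mem_pair hdlne, hco, hco, hA1, hA2, one_smul, one_smul]

/-- P2, equal case: `e_{(a,a)} e_w = e_{(a-1,a)}`. -/
lemma P2eq (a : ℤ) (ha : (2:ℤ) ∣ (a-1)) :
    H.e (Mat2 1 a 1 a) * H.e (Mat2 1 1 1 0) = H.e (Mat2 1 (a-1) 1 a) := by
  have hcol := colS_Mat2_lam0 a a ha ha
  have key := H.lusztig_col_minus 2 1 (Mat2 1 a 1 a) (mem_Theta 1 a 1 a)
    (by rw [hcol]; simp [lam0])
  have hgen : (fun x y => diagM (colS (Mat2 1 a 1 a)) x y - 1 * Edel 2 (2+1) (2+1) x y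
      + 1 * Edel 2 (2+1) 2 x y) = Mat2 1 1 1 0 := by
    rw [hcol]; funext x y
    simp only [diagM, Mat2, Edel, cast2, lam0, one_mul]
    split_ifs <;> omega
  rw [hgen] at key
  have hset : {t | t ∈ CompInf 1 ∧ ∀ u, t u ≤ Mat2 1 a 1 a u (2+1)}
      = ({dl (4-a)} : Set (ℤ → ℕ)) := by
    ext t
    simp only [Set.mem_setOf_eq, Set.mem_singleton_iff]
    constructor
    · rintro ⟨ht1, ht2⟩
      obtain ⟨p, rfl, hp1⟩ := compinf_one ht1
      have h := ht2 p
      rw [congrFun (Mat2_col3 a a ha ha) p, hp1] at h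
      simp only [dl] at h
      split_ifs at h with h1
      · rw [h1]
      · omega
    · rintro rfl
      exact ⟨dl_mem _, fun u => by
        rw [congrFun (Mat2_col3 a a ha ha) u]; simp only [dl]; split_ifs <;> omega⟩
  have hco : ∀ t : ℤ → ℕ,
      ((∏ᶠ u, Nat.choose (Mat2 1 a 1 a u 2 + t u) (t u) : ℕ) : ℚ) = 1 := by
    intro t
    rw [finprod_eq_one_of_forall_eq_one (fun u => by
      have h2 : Mat2 1 a 1 a u 2 = 0 := by
        have := Mat2_col2 a a u ha ha
        rwa [show (1:ℤ)+1 = 2 by norm_num] at this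
      rw [h2, zero_add, Nat.choose_self])]
    norm_num
  have hA1 : colSub 2 2 (dl (4-a)) (Mat2 1 a 1 a) = Mat2 1 (a-1) 1 a := by
    funext x y
    simp only [colSub, Mat2, Edel, dl, cast2]
    split_ifs <;> omega
  rw [key, hset, finsum_mem_singleton, hco, hA1, one_smul]

end Products
section Products2
variable {S : Type} [Ring S] [Algebra ℚ S] (H : AffineSchur22 S)

lemma Mat2_def (i j : ℤ) :
    (fun x y => Edel 2 1 i x y + Edel 2 1 j x y) = Mat2 1 i 1 j := rfl

lemma colS_Mat2_mu0 : colS (Mat2 1 2 1 2) = mu0 := by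
  rw [colS_Mat2]; funext k; simp only [mu0]; split_ifs <;> omega

/-- P3: `e_{(a,c)} π₄ = e_{(a+1,c+1)}` for odd `a, c`. -/
lemma P3 (a c : ℤ) (ha : (2:ℤ) ∣ (a-1)) (hc : (2:ℤ) ∣ (c-1)) :
    H.e (Mat2 1 a 1 c) * H.e (Mat2 1 2 1 2) = H.e (Mat2 1 (a+1) 1 (c+1)) := by
  have hcol := colS_Mat2_lam0 a c ha hc
  have key := H.lusztig_col_plus 1 2 (Mat2 1 a 1 c) (mem_Theta 1 a 1 c)
    (by rw [hcol]; simp [lam0])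
  have hgen : (fun x y => diagM (colS (Mat2 1 a 1 c)) x y + 2 * Edel 2 1 (1+1) x y
      - 2 * Edel 2 1 1 x y) = Mat2 1 2 1 2 := by
    rw [hcol]; funext x y
    simp only [diagM, Mat2, Edel, cast2, lam0]
    split_ifs <;> omega
  rw [hgen] at key
  have hgfin : (Function.support (fun u => Mat2 1 a 1 c u 1)).Finite :=
    (mem_Theta 1 a 1 c).2.2.1 1
  have hg2 : ∑ᶠ u, Mat2 1 a 1 c u 1 = 2 := by
    have h := congrFun hcol 1
    simp only [lam0] at h
    rw [if_pos (by omega)] at h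
    exact h
  have hset : {t | t ∈ CompInf 2 ∧ ∀ u, t u ≤ Mat2 1 a 1 c u 1}
      = ({fun u => Mat2 1 a 1 c u 1} : Set (ℤ → ℕ)) := by
    ext t
    simp only [Set.mem_setOf_eq, Set.mem_singleton_iff]
    constructor
    · rintro ⟨⟨tf, ts⟩, tle⟩
      exact eq_of_le_finsum hgfin tle (ts.trans hg2.symm)
    · rintro rfl
      exact ⟨⟨hgfin, hg2⟩, fun u => le_refl _⟩
  have hA : colAdd 2 1 (fun u => Mat2 1 a 1 c u 1) (Mat2 1 a 1 c)
      = Mat2 1 (a+1) 1 (c+1) := by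
    funext x y
    simp only [colAdd, Mat2, Edel, cast2]
    by_cases hy : (2:ℤ) ∣ (y-1)
    · rw [if_neg (show ¬((2:ℤ) ∣ (y-(1+1))) by omega), if_pos hy]
      split_ifs <;> omega
    · rw [if_pos (show (2:ℤ) ∣ (y-(1+1)) by omega), if_neg hy]
      split_ifs <;> omega
  rw [key, hset, finsum_mem_singleton, coeff_one _ _ ha hc, hA, one_smul]

/-- P4 : `π₄ τ(π₄) = e_λ`. -/
lemma P4 : H.e (Mat2 1 2 1 2) * H.e (Mat2 2 1 2 1) = H.e (diagM lam0) := by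
  have hcol := colS_Mat2_mu0
  have key := H.lusztig_col_minus 1 2 (Mat2 1 2 1 2) (mem_Theta 1 2 1 2)
    (by rw [hcol]; simp [mu0])
  have hgen : (fun x y => diagM (colS (Mat2 1 2 1 2)) x y - 2 * Edel 2 (1+1) (1+1) x y
      + 2 * Edel 2 (1+1) 1 x y) = Mat2 2 1 2 1 := by
    rw [hcol]; funext x y
    simp only [diagM, Mat2, Edel, cast2, mu0]
    split_ifs <;> omega
  rw [hgen] at key
  have hgfin : (Function.support (fun u => Mat2 1 2 1 2 u (1+1))).Finite :=
    (mem_Theta 1 2 1 2).2.2.1 (1+1)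
  have hg2 : ∑ᶠ u, Mat2 1 2 1 2 u (1+1) = 2 := by
    have h := congrFun hcol 2
    simp only [mu0] at h
    rw [if_pos (by omega)] at h
    rw [show (1:ℤ)+1 = 2 by norm_num]
    exact h
  have hset : {t | t ∈ CompInf 2 ∧ ∀ u, t u ≤ Mat2 1 2 1 2 u (1+1)}
      = ({fun u => Mat2 1 2 1 2 u (1+1)} : Set (ℤ → ℕ)) := by
    ext t
    simp only [Set.mem_setOf_eq, Set.mem_singleton_iff]
    constructor
    · rintro ⟨⟨tf, ts⟩, tle⟩
      exact eq_of_le_finsum hgfin tle (ts.trans hg2.symm)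
    · rintro rfl
      exact ⟨⟨hgfin, hg2⟩, fun u => le_refl _⟩
  have hco : ((∏ᶠ u, Nat.choose (Mat2 1 2 1 2 u 1 + Mat2 1 2 1 2 u (1+1))
      (Mat2 1 2 1 2 u (1+1)) : ℕ) : ℚ) = 1 := by
    rw [finprod_eq_one_of_forall_eq_one (fun u => by
      have h1 : Mat2 1 2 1 2 u 1 = 0 := by
        simp only [Mat2, Edel, cast2]; split_ifs <;> omega
      rw [h1, zero_add, Nat.choose_self])]
    norm_num
  have hA : colSub 2 1 (fun u => Mat2 1 2 1 2 u (1+1)) (Mat2 1 2 1 2) = diagM lam0 := by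
    funext x y
    simp only [colSub, Mat2, Edel, diagM, lam0, cast2]
    by_cases hy : (2:ℤ) ∣ (y-1)
    · rw [if_pos hy, if_neg (show ¬((2:ℤ) ∣ (y-(1+1))) by omega)]
      split_ifs <;> omega
    · rw [if_neg hy, if_pos (show (2:ℤ) ∣ (y-(1+1)) by omega)]
      split_ifs <;> omega
  rw [key, hset, finsum_mem_singleton, hco, hA, one_smul]

/-- some vanishing products -/
lemma z_pi1_elam : H.e (Mat2 1 1 1 2) * H.e (diagM lam0) = 0 := by
  apply H.mul_disjoint _ _ (mem_Theta 1 1 1 2) diag_mem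
  rw [colS_Mat2, rowS_diag]
  intro h
  have := congrFun h 2
  simp only [lam0] at this
  split_ifs at this <;> omega

lemma z_pi2_elam : H.e (Mat2 1 2 1 3) * H.e (diagM lam0) = 0 := by
  apply H.mul_disjoint _ _ (mem_Theta 1 2 1 3) diag_mem
  rw [colS_Mat2, rowS_diag]
  intro h
  have := congrFun h 2
  simp only [lam0] at this
  split_ifs at this <;> omega

lemma z_pi4_elam : H.e (Mat2 1 2 1 2) * H.e (diagM lam0) = 0 := by
  apply H.mul_disjoint _ _ (mem_Theta 1 2 1 2) diag_mem
  rw [colS_Mat2, rowS_diag]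
  intro h
  have := congrFun h 1
  simp only [lam0] at this
  split_ifs at this <;> omega

lemma z_pi1_y4 : H.e (Mat2 1 1 1 2) * H.e (Mat2 2 1 2 1) = 0 := by
  apply H.mul_disjoint _ _ (mem_Theta 1 1 1 2) (mem_Theta 2 1 2 1)
  rw [colS_Mat2, rowS_Mat2]
  intro h
  have := congrFun h 1
  split_ifs at this <;> omega

lemma z_pi2_y4 : H.e (Mat2 1 2 1 3) * H.e (Mat2 2 1 2 1) = 0 := by
  apply H.mul_disjoint _ _ (mem_Theta 1 2 1 3) (mem_Theta 2 1 2 1)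
  rw [colS_Mat2, rowS_Mat2]
  intro h
  have := congrFun h 1
  split_ifs at this <;> omega

lemma z_elam_y4 : H.e (diagM lam0) * H.e (Mat2 2 1 2 1) = 0 := by
  apply H.mul_disjoint _ _ diag_mem (mem_Theta 2 1 2 1)
  rw [colS_diag, rowS_Mat2]
  intro h
  have := congrFun h 1
  simp only [lam0] at this
  split_ifs at this <;> omega

/-- tau values -/
lemma tau_elam : H.tau (H.e (diagM lam0)) = H.e (diagM lam0) := by
  rw [H.tau_e]
  congr 1
  funext x y
  simp only [diagM, lam0]
  split_ifs <;> omega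

lemma tau_pi1 : H.tau (H.e (Mat2 1 1 1 2)) = H.e (Mat2 1 1 2 1) := by
  rw [H.tau_e]; congr 1; funext x y
  simp only [Mat2, Edel, cast2]; split_ifs <;> omega

lemma tau_pi2 : H.tau (H.e (Mat2 1 2 1 3)) = H.e (Mat2 2 1 3 1) := by
  rw [H.tau_e]; congr 1; funext x y
  simp only [Mat2, Edel, cast2]; split_ifs <;> omega

lemma tau_pi1' : H.tau (H.e (Mat2 1 1 2 1)) = H.e (Mat2 1 1 1 2) := by
  rw [H.tau_e]; congr 1; funext x y
  simp only [Mat2, Edel, cast2]; split_ifs <;> omega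

lemma tau_pi2' : H.tau (H.e (Mat2 2 1 3 1)) = H.e (Mat2 1 2 1 3) := by
  rw [H.tau_e]; congr 1; funext x y
  simp only [Mat2, Edel, cast2]; split_ifs <;> omega

lemma tau_pi4 : H.tau (H.e (Mat2 1 2 1 2)) = H.e (Mat2 2 1 2 1) := by
  rw [H.tau_e]; congr 1; funext x y
  simp only [Mat2, Edel, cast2]; split_ifs <;> omega

lemma tau_pi4' : H.tau (H.e (Mat2 2 1 2 1)) = H.e (Mat2 1 2 1 2) := by
  rw [H.tau_e]; congr 1; funext x y
  simp only [Mat2, Edel, cast2]; split_ifs <;> omega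

lemma tau_Eodd (a c : ℤ) (ha : (2:ℤ) ∣ (a-1)) (hc : (2:ℤ) ∣ (c-1)) :
    H.tau (H.e (Mat2 1 a 1 c)) = H.e (Mat2 1 (2-a) 1 (2-c)) := by
  rw [H.tau_e]; congr 1; funext x y
  simp only [Mat2, Edel, cast2]; split_ifs <;> omega

lemma tau_z : H.tau (H.e (fun x y => 2 * Edel 2 1 3 x y))
    = H.e (fun x y => 2 * Edel 2 3 1 x y) := by
  rw [H.tau_e]; congr 1; funext x y
  simp only [Edel, cast2]; split_ifs <;> omega

/-- left shifts -/
lemma zleft (i j : ℤ) : H.e (fun x y => 2 * Edel 2 1 3 x y) * H.e (Mat2 1 i 1 j)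
    = H.e (Mat2 1 (i+2) 1 (j+2)) := by
  have h := H.x2_shift i j
  rwa [Mat2_def, Mat2_def] at h

lemma zpleft (i j : ℤ) : H.e (fun x y => 2 * Edel 2 3 1 x y) * H.e (Mat2 1 i 1 j)
    = H.e (Mat2 1 (i-2) 1 (j-2)) := by
  have h := H.x2inv_shift i j
  rwa [Mat2_def, Mat2_def] at h

/-- right shift, via `τ` -/
lemma zright (a c : ℤ) (ha : (2:ℤ) ∣ (a-1)) (hc : (2:ℤ) ∣ (c-1)) :
    H.e (Mat2 1 a 1 c) * H.e (fun x y => 2 * Edel 2 1 3 x y)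
      = H.e (Mat2 1 (a+2) 1 (c+2)) := by
  have h1 := zpleft H (2-a) (2-c)
  rw [show (2-a-2 : ℤ) = -a by ring, show (2-c-2 : ℤ) = -c by ring] at h1
  have h2 : H.tau (H.e (Mat2 1 a 1 c) * H.e (fun x y => 2 * Edel 2 1 3 x y))
      = H.e (Mat2 1 (-a) 1 (-c)) := by
    rw [H.tau_mul, tau_z, tau_Eodd _ a c ha hc, h1]
  have h3 := congrArg H.tau h2
  rw [H.tau_invol] at h3
  rw [h3, tau_Eodd _ (-a) (-c) (by omega) (by omega)]
  rw [show (2-(-a) : ℤ) = a+2 by ring, show (2-(-c) : ℤ) = c+2 by ring]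

/-- `π₂ = z ⬝ e_{(0,1)}` -/
lemma pi2_z : H.e (Mat2 1 2 1 3)
    = H.e (fun x y => 2 * Edel 2 1 3 x y) * H.e (Mat2 1 0 1 1) := by
  rw [zleft]; norm_num

/-- P7: products with π₂ -/
lemma P7ne (a c : ℤ) (ha : (2:ℤ) ∣ (a-1)) (hc : (2:ℤ) ∣ (c-1)) (hne : a ≠ c) :
    H.e (Mat2 1 a 1 c) * H.e (Mat2 1 2 1 3)
      = H.e (Mat2 1 (a+1) 1 (c+2)) + H.e (Mat2 1 (a+2) 1 (c+1)) := by
  rw [pi2_z, ← mul_assoc, zright _ a c ha hc, Mat2_comm 0 1,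
    P2ne _ (a+2) (c+2) (by omega) (by omega) (by omega)]
  rw [show (a+2-1 : ℤ) = a+1 by ring, show (c+2-1 : ℤ) = c+1 by ring]

lemma P7eq (a : ℤ) (ha : (2:ℤ) ∣ (a-1)) :
    H.e (Mat2 1 a 1 a) * H.e (Mat2 1 2 1 3) = H.e (Mat2 1 (a+1) 1 (a+2)) := by
  rw [pi2_z, ← mul_assoc, zright _ a a ha ha, Mat2_comm 0 1,
    P2eq _ (a+2) (by omega)]
  rw [show (a+2-1 : ℤ) = a+1 by ring]

end Products2
section Exist
variable {S : Type} [Ring S] [Algebra ℚ S]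

def piVec (H : AffineSchur22 S) : Fin 4 → S :=
  ![H.e (Mat2 1 1 1 2), H.e (Mat2 1 2 1 3),
    H.e (fun x y => 2 * Edel 2 1 1 x y), H.e (fun x y => 2 * Edel 2 1 2 x y)]

def Bset (H : AffineSchur22 S) : Set S :=
  {b | H.e (diagM lam0) * b * H.e (diagM lam0) = b}

variable (H : AffineSchur22 S)

lemma piVec0 : piVec H 0 = H.e (Mat2 1 1 1 2) := rfl
lemma piVec1 : piVec H 1 = H.e (Mat2 1 2 1 3) := rfl
lemma piVec2 : piVec H 2 = H.e (Mat2 1 1 1 1) := by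
  show H.e (fun x y => 2 * Edel 2 1 1 x y) = _
  rw [twoE]
lemma piVec3 : piVec H 3 = H.e (Mat2 1 2 1 2) := by
  show H.e (fun x y => 2 * Edel 2 1 2 x y) = _
  rw [twoE]

lemma zero_mem_B : (0 : S) ∈ Bset H := by
  simp [Bset]

lemma elam_mem_B : H.e (diagM lam0) ∈ Bset H := by
  simp only [Bset, Set.mem_setOf_eq]
  rw [elam_idem, elam_idem]

lemma e_mem_B (i j : ℤ) (hi : (2:ℤ) ∣ (i-1)) (hj : (2:ℤ) ∣ (j-1)) :
    H.e (Mat2 1 i 1 j) ∈ Bset H :=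
  e_sandwich H i j hi hj

lemma B_left {b : S} (hb : b ∈ Bset H) : H.e (diagM lam0) * b = b := by
  conv_lhs => rw [← hb]
  simp only [← mul_assoc]
  rw [elam_idem]
  exact hb

lemma B_right {b : S} (hb : b ∈ Bset H) : b * H.e (diagM lam0) = b := by
  conv_lhs => rw [← hb]
  simp only [mul_assoc]
  rw [elam_idem]
  simp only [← mul_assoc]
  exact hb

lemma B_mul {b c : S} (hb : b ∈ Bset H) (hc : c ∈ Bset H) : b * c ∈ Bset H := by
  simp only [Bset, Set.mem_setOf_eq, ← mul_assoc]
  rw [B_left H hb, mul_assoc, B_right H hc]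

lemma B_add {b c : S} (hb : b ∈ Bset H) (hc : c ∈ Bset H) : b + c ∈ Bset H := by
  simp only [Bset, Set.mem_setOf_eq] at *
  rw [mul_add, add_mul, hb, hc]

def Mmod (H : AffineSchur22 S) : Submodule ℚ S where
  carrier := {x | ∃ b : Fin 4 → S, (∀ i, b i ∈ Bset H) ∧ x = ∑ i, b i * piVec H i}
  add_mem' := by
    rintro x y ⟨b, hb, rfl⟩ ⟨c, hc, rfl⟩
    refine ⟨fun i => b i + c i, fun i => B_add H (hb i) (hc i), ?_⟩
    rw [← Finset.sum_add_distrib]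
    exact Finset.sum_congr rfl (fun i _ => (add_mul _ _ _).symm)
  zero_mem' := ⟨0, fun i => zero_mem_B H, by simp⟩
  smul_mem' := by
    rintro q x ⟨b, hb, rfl⟩
    refine ⟨fun i => q • b i, fun i => ?_, ?_⟩
    · simp only [Bset, Set.mem_setOf_eq] at *
      rw [mul_smul_comm, smul_mul_assoc, hb i]
    · rw [Finset.smul_sum]
      exact Finset.sum_congr rfl (fun i _ => (smul_mul_assoc _ _ _).symm)

lemma single_mem {b : S} (i : Fin 4) (hb : b ∈ Bset H) : b * piVec H i ∈ Mmod H := by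
  refine ⟨fun j => if j = i then b else 0, fun j => ?_, ?_⟩
  · dsimp only
    split_ifs
    · exact hb
    · exact zero_mem_B H
  · symm
    rw [Finset.sum_eq_single i (fun j _ hj => by dsimp only; rw [if_neg hj, zero_mul])
      (fun h => absurd (Finset.mem_univ i) h)]
    dsimp only
    rw [if_pos rfl]

lemma B_mul_mem {b : S} (hb : b ∈ Bset H) {x : S} (hx : x ∈ Mmod H) :
    b * x ∈ Mmod H := by
  obtain ⟨c, hc, rfl⟩ := hx
  refine ⟨fun i => b * c i, fun i => B_mul H hb (hc i), ?_⟩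
  rw [Finset.mul_sum]
  exact Finset.sum_congr rfl (fun i _ => (mul_assoc _ _ _).symm)

lemma zB : H.e (fun x y => 2 * Edel 2 1 3 x y) ∈ Bset H := by
  rw [twoE]
  exact e_mem_B H 3 3 (by omega) (by omega)

lemma zpB : H.e (fun x y => 2 * Edel 2 3 1 x y) ∈ Bset H := by
  rw [twoE]
  show _ ∈ _
  have hrow : rowS (Mat2 3 1 3 1) = lam0 := by
    rw [rowS_Mat2]; funext x; simp only [lam0]; split_ifs <;> omega
  have hcol : colS (Mat2 3 1 3 1) = lam0 := by
    rw [colS_Mat2]; funext k; simp only [lam0]; split_ifs <;> omega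
  have h1 := H.diag_row (Mat2 3 1 3 1) (mem_Theta 3 1 3 1)
  have h2 := H.diag_col (Mat2 3 1 3 1) (mem_Theta 3 1 3 1)
  rw [hrow] at h1; rw [hcol] at h2
  simp only [Bset, Set.mem_setOf_eq]
  rw [h1, h2]

lemma shiftIff (i j : ℤ) :
    H.e (Mat2 1 i 1 j) ∈ Mmod H ↔ H.e (Mat2 1 (i+2) 1 (j+2)) ∈ Mmod H := by
  constructor
  · intro h
    have := B_mul_mem H (zB H) h
    rwa [zleft] at this
  · intro h
    have := B_mul_mem H (zpB H) h
    rw [zpleft] at this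
    rwa [show (i+2-2 : ℤ) = i by ring, show (j+2-2 : ℤ) = j by ring] at this

lemma shiftIter (s : ℤ) (i j : ℤ) :
    H.e (Mat2 1 i 1 j) ∈ Mmod H ↔ H.e (Mat2 1 (i+2*s) 1 (j+2*s)) ∈ Mmod H := by
  induction s using Int.induction_on with
  | zero => simp
  | succ n ih =>
      rw [ih, shiftIff, show (i+2*(n:ℤ)+2 : ℤ) = i+2*((n:ℤ)+1) by ring,
        show (j+2*(n:ℤ)+2 : ℤ) = j+2*((n:ℤ)+1) by ring]
  | pred n ih =>
      rw [show (i+2*(-(n:ℤ)-1) : ℤ) = (i+2*(-(n:ℤ)-1)) by ring]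
      have : H.e (Mat2 1 (i+2*(-(n:ℤ)-1)) 1 (j+2*(-(n:ℤ)-1))) ∈ Mmod H
          ↔ H.e (Mat2 1 (i+2*(-(n:ℤ))) 1 (j+2*(-(n:ℤ)))) ∈ Mmod H := by
        rw [shiftIff, show (i+2*(-(n:ℤ)-1)+2 : ℤ) = i+2*(-(n:ℤ)) by ring,
          show (j+2*(-(n:ℤ)-1)+2 : ℤ) = j+2*(-(n:ℤ)) by ring]
      rw [this, ← ih]

lemma pi1_mem : H.e (Mat2 1 1 1 2) ∈ Mmod H := by
  have := single_mem H 0 (elam_mem_B H)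
  rwa [piVec0, elam_e] at this

lemma w_eq : H.e (Mat2 1 1 1 0)
    = H.e (fun x y => 2 * Edel 2 3 1 x y) * H.e (Mat2 1 2 1 3) := by
  have h := zpleft H 2 3
  rw [show (2-2 : ℤ) = 0 by ring, show (3-2 : ℤ) = 1 by ring, Mat2_comm 0 1] at h
  exact h.symm

lemma w_mem : H.e (Mat2 1 1 1 0) ∈ Mmod H := by
  rw [w_eq, ← piVec1]
  exact single_mem H 1 (zpB H)

lemma ew_mem {b : S} (hb : b ∈ Bset H) : b * H.e (Mat2 1 1 1 0) ∈ Mmod H := by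
  rw [w_eq, ← piVec1, ← mul_assoc]
  exact single_mem H 1 (B_mul H hb (zpB H))

lemma Gk : ∀ k : ℕ, H.e (Mat2 1 1 1 (2+2*(k:ℤ))) ∈ Mmod H
    ∧ H.e (Mat2 1 1 1 (-2*(k:ℤ))) ∈ Mmod H := by
  intro k
  induction k with
  | zero =>
      constructor
      · rw [show (2+2*((0:ℕ):ℤ) : ℤ) = 2 by norm_num]
        exact pi1_mem H
      · rw [show (-2*((0:ℕ):ℤ) : ℤ) = 0 by norm_num]
        exact w_mem H
  | succ k ih =>
      obtain ⟨ih1, ih2⟩ := ih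
      constructor
      · -- e (E 1 (2k+4))
        have hP := P1ne H 1 (2*(k:ℤ)+3) (by omega) (by omega) (by omega)
        rw [show (2*(k:ℤ)+3+1 : ℤ) = 2*(k:ℤ)+4 by ring,
          show (1:ℤ)+1 = 2 by norm_num] at hP
        have hkey : H.e (Mat2 1 1 1 (2*(k:ℤ)+4))
            = H.e (Mat2 1 1 1 (2*(k:ℤ)+3)) * H.e (Mat2 1 1 1 2)
              - H.e (Mat2 1 2 1 (2*(k:ℤ)+3)) :=
          eq_sub_of_add_eq' hP.symm
        have ht1 : H.e (Mat2 1 1 1 (2*(k:ℤ)+3)) * H.e (Mat2 1 1 1 2) ∈ Mmod H := by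
          rw [← piVec0]
          exact single_mem H 0 (e_mem_B H 1 (2*(k:ℤ)+3) (by omega) (by omega))
        have ht2 : H.e (Mat2 1 2 1 (2*(k:ℤ)+3)) ∈ Mmod H := by
          rw [Mat2_comm]
          have h2 := (shiftIter H ((k:ℤ)+1) 1 (-2*(k:ℤ))).1 ih2
          rwa [show (1+2*((k:ℤ)+1) : ℤ) = 2*(k:ℤ)+3 by ring,
            show (-2*(k:ℤ)+2*((k:ℤ)+1) : ℤ) = 2 by ring] at h2
        rw [show (2+2*((k+1:ℕ):ℤ) : ℤ) = 2*(k:ℤ)+4 by push_cast; ring, hkey]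
        exact Submodule.sub_mem _ ht1 ht2
      · -- e (E 1 (-2k-2))
        have hP := P2ne H 1 (-2*(k:ℤ)-1) (by omega) (by omega) (by omega)
        rw [show (-2*(k:ℤ)-1-1 : ℤ) = -2*(k:ℤ)-2 by ring,
          show (1:ℤ)-1 = 0 by norm_num] at hP
        have hkey : H.e (Mat2 1 1 1 (-2*(k:ℤ)-2))
            = H.e (Mat2 1 1 1 (-2*(k:ℤ)-1)) * H.e (Mat2 1 1 1 0)
              - H.e (Mat2 1 0 1 (-2*(k:ℤ)-1)) :=
          eq_sub_of_add_eq' hP.symm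
        have ht1 : H.e (Mat2 1 1 1 (-2*(k:ℤ)-1)) * H.e (Mat2 1 1 1 0) ∈ Mmod H :=
          ew_mem H (e_mem_B H 1 (-2*(k:ℤ)-1) (by omega) (by omega))
        have ht2 : H.e (Mat2 1 0 1 (-2*(k:ℤ)-1)) ∈ Mmod H := by
          rw [Mat2_comm]
          have h2 := (shiftIter H (-(k:ℤ)-1) 1 (2+2*(k:ℤ))).1 ih1
          rwa [show (1+2*(-(k:ℤ)-1) : ℤ) = -2*(k:ℤ)-1 by ring,
            show (2+2*(k:ℤ)+2*(-(k:ℤ)-1) : ℤ) = 0 by ring] at h2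
        rw [show (-2*((k+1:ℕ):ℤ) : ℤ) = -2*(k:ℤ)-2 by push_cast; ring, hkey]
        exact Submodule.sub_mem _ ht1 ht2

lemma mixed_mem (a b : ℤ) (ha : (2:ℤ) ∣ (a-1)) (hb : (2:ℤ) ∣ b) :
    H.e (Mat2 1 a 1 b) ∈ Mmod H := by
  have hbase : H.e (Mat2 1 1 1 (b-a+1)) ∈ Mmod H := by
    rcases le_or_gt (b-a+1) 0 with hm | hm
    · obtain ⟨k, hk⟩ : ∃ k : ℕ, b-a+1 = -2*(k:ℤ) := ⟨((a-1-b)/2).toNat, by omega⟩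
      rw [hk]; exact (Gk H k).2
    · obtain ⟨k, hk⟩ : ∃ k : ℕ, b-a+1 = 2+2*(k:ℤ) := ⟨((b-a-1)/2).toNat, by omega⟩
      rw [hk]; exact (Gk H k).1
  obtain ⟨s, hs⟩ := ha
  have h2 := (shiftIter H s 1 (b-a+1)).1 hbase
  rwa [show (1+2*s : ℤ) = a by omega, show (b-a+1+2*s : ℤ) = b by omega] at h2

lemma oo_mem (i j : ℤ) (hi : (2:ℤ) ∣ (i-1)) (hj : (2:ℤ) ∣ (j-1)) :
    H.e (Mat2 1 i 1 j) ∈ Mmod H := by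
  have h := single_mem H 2 (e_mem_B H i j hi hj)
  rwa [piVec2, ← diag_lam0, e_elam H i j hi hj] at h

lemma ee_mem (i j : ℤ) (hi : (2:ℤ) ∣ i) (hj : (2:ℤ) ∣ j) :
    H.e (Mat2 1 i 1 j) ∈ Mmod H := by
  have h := single_mem H 3 (e_mem_B H (i-1) (j-1) (by omega) (by omega))
  rwa [piVec3, P3 H (i-1) (j-1) (by omega) (by omega),
    show (i-1+1 : ℤ) = i by ring, show (j-1+1 : ℤ) = j by ring] at h

lemma gen_mem (i j : ℤ) : H.e (Mat2 1 i 1 j) ∈ Mmod H := by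
  by_cases hi : (2:ℤ) ∣ (i-1) <;> by_cases hj : (2:ℤ) ∣ (j-1)
  · exact oo_mem H i j hi hj
  · exact mixed_mem H i j hi (by omega)
  · rw [Mat2_comm]
    exact mixed_mem H j i hj (by omega)
  · exact ee_mem H i j (by omega) (by omega)

lemma exist_left (x : S) (hx : H.e (diagM lam0) * x = x) : x ∈ Mmod H := by
  have hx' : x ∈ Submodule.map (LinearMap.mulLeft ℚ (H.e (diagM lam0))) ⊤ :=
    ⟨x, trivial, hx⟩
  rw [← H.span_eq_top, Submodule.map_span] at hx'
  refine Submodule.span_le.2 ?_ hx'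
  rintro v ⟨w, ⟨A, hA, rfl⟩, rfl⟩
  simp only [LinearMap.mulLeft_apply, SetLike.mem_coe]
  by_cases hrow : rowS A = lam0
  · obtain ⟨i, j, rfl⟩ := classify_row hA hrow
    rw [elam_e]
    exact gen_mem H i j
  · rw [H.mul_disjoint _ _ diag_mem hA (by rw [colS_diag]; exact fun h => hrow h.symm)]
    exact (Mmod H).zero_mem

end Exist
section Uniq
variable {S : Type} [Ring S] [Algebra ℚ S]

noncomputable def bas (H : AffineSchur22 S) : Module.Basis (ThetaAff 2 2) ℚ S :=
  Module.Basis.mk H.indep (by rw [← Set.image_eq_range, H.span_eq_top])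

def idx (p q : ℤ) : ThetaAff 2 2 := ⟨Mat2 1 p 1 q, mem_Theta 1 p 1 q⟩

noncomputable def Pmap (H : AffineSchur22 S) : S →ₗ[ℚ] S :=
  (LinearMap.mulRight ℚ (H.e (diagM lam0))).comp
    (LinearMap.mulLeft ℚ (H.e (diagM lam0)))

variable (H : AffineSchur22 S)

lemma bas_apply (i : ThetaAff 2 2) : bas H i = H.e i.1 := Module.Basis.mk_apply _ _ _

lemma idx_eq_iff {p q r s : ℤ} :
    idx p q = idx r s ↔ ((p = r ∧ q = s) ∨ (p = s ∧ q = r)) := by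
  rw [Subtype.ext_iff]
  exact Mat2_eq_iff

lemma bas_idx (p q : ℤ) : bas H (idx p q) = H.e (Mat2 1 p 1 q) :=
  bas_apply H (idx p q)

lemma Pmap_apply (x : S) :
    Pmap H x = H.e (diagM lam0) * x * H.e (diagM lam0) := rfl

lemma mem_B_Pmap {x : S} (hx : x ∈ Bset H) : Pmap H x = x := hx

lemma basis_cases (j : ThetaAff 2 2) :
    (∃ a c, (2:ℤ) ∣ (a-1) ∧ (2:ℤ) ∣ (c-1) ∧ j.1 = Mat2 1 a 1 c
      ∧ Pmap H (bas H j) = bas H j)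
    ∨ Pmap H (bas H j) = 0 := by
  by_cases hrow : rowS j.1 = lam0
  · by_cases hcol : colS j.1 = lam0
    · obtain ⟨a, c, ha, hc, hm⟩ := classify_B j.2 hrow hcol
      refine Or.inl ⟨a, c, ha, hc, hm, ?_⟩
      rw [bas_apply, Pmap_apply, hm, e_sandwich H a c ha hc]
    · refine Or.inr ?_
      rw [bas_apply, Pmap_apply]
      have h1 : H.e (diagM lam0) * H.e j.1 = H.e j.1 := by
        have := H.diag_row j.1 j.2
        rwa [hrow] at this
      rw [h1, H.mul_disjoint j.1 _ j.2 diag_mem (by rw [rowS_diag]; exact hcol)]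
  · refine Or.inr ?_
    rw [bas_apply, Pmap_apply,
      H.mul_disjoint _ j.1 diag_mem j.2
        (by rw [colS_diag]; exact fun h => hrow h.symm), zero_mul]

noncomputable def co (H : AffineSchur22 S) (i : ThetaAff 2 2) : S →ₗ[ℚ] ℚ :=
  (Finsupp.lapply i).comp ((bas H).repr.toLinearMap)

lemma co_apply (i : ThetaAff 2 2) (x : S) : co H i x = (bas H).repr x i := rfl

lemma coordW {i : ThetaAff 2 2} (hi : Pmap H (bas H i) = 0) {x : S}
    (hx : Pmap H x = x) : (bas H).repr x i = 0 := by
  classical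
  have hL : (co H i).comp (Pmap H) = 0 := by
    apply Module.Basis.ext (bas H)
    intro j
    simp only [LinearMap.comp_apply, LinearMap.zero_apply]
    rcases basis_cases H j with ⟨a, c, ha, hc, hm, hPj⟩ | hPj
    · rw [hPj, co_apply, Module.Basis.repr_self, Finsupp.single_apply]
      rw [if_neg]
      intro hji
      rw [hji] at hPj
      rw [hi] at hPj
      exact (bas H).ne_zero i hPj.symm
    · rw [hPj, map_zero]
  have := LinearMap.congr_fun hL x
  simp only [LinearMap.comp_apply, LinearMap.zero_apply, hx, co_apply] at this
  exact this

lemma repr_pi1 (α β : ℤ) (hα : (2:ℤ) ∣ (α-1)) (hβ : (2:ℤ) ∣ β) (x : S)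
    (hx : Pmap H x = x) :
    (bas H).repr (x * H.e (Mat2 1 1 1 2)) (idx α β)
      = (bas H).repr x (idx α (β-1)) := by
  classical
  have hL : (co H (idx α β)).comp ((LinearMap.mulRight ℚ (H.e (Mat2 1 1 1 2))).comp
        (Pmap H))
      = (co H (idx α (β-1))).comp (Pmap H) := by
    apply Module.Basis.ext (bas H)
    intro j
    simp only [LinearMap.comp_apply, LinearMap.mulRight_apply]
    rcases basis_cases H j with ⟨a, c, ha, hc, hm, hPj⟩ | hPj
    · rw [hPj, co_apply, co_apply, bas_apply, hm]
      by_cases hac : a = c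
      · subst hac
        rw [P1eq H a ha, ← bas_idx H (a+1) a, ← bas_idx H a a,
          Module.Basis.repr_self, Module.Basis.repr_self, Finsupp.single_apply, Finsupp.single_apply]
        simp only [idx_eq_iff]
        split_ifs <;> first | rfl | omega | norm_num
      · rw [P1ne H a c ha hc hac, map_add, Finsupp.add_apply,
          ← bas_idx H (a+1) c,
          ← bas_idx H a (c+1),
          ← bas_idx H a c,
          Module.Basis.repr_self, Module.Basis.repr_self, Module.Basis.repr_self,
          Finsupp.single_apply, Finsupp.single_apply, Finsupp.single_apply]
        simp only [idx_eq_iff]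
        split_ifs <;> first | rfl | omega | norm_num
    · rw [hPj, zero_mul, map_zero, map_zero]
  have := LinearMap.congr_fun hL x
  simp only [LinearMap.comp_apply, LinearMap.mulRight_apply, hx, co_apply] at this
  exact this

lemma repr_pi2 (α β : ℤ) (hα : (2:ℤ) ∣ (α-1)) (hβ : (2:ℤ) ∣ β) (x : S)
    (hx : Pmap H x = x) :
    (bas H).repr (x * H.e (Mat2 1 2 1 3)) (idx α β)
      = (bas H).repr x (idx (α-2) (β-1)) := by
  classical
  have hL : (co H (idx α β)).comp ((LinearMap.mulRight ℚ (H.e (Mat2 1 2 1 3))).comp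
        (Pmap H))
      = (co H (idx (α-2) (β-1))).comp (Pmap H) := by
    apply Module.Basis.ext (bas H)
    intro j
    simp only [LinearMap.comp_apply, LinearMap.mulRight_apply]
    rcases basis_cases H j with ⟨a, c, ha, hc, hm, hPj⟩ | hPj
    · rw [hPj, co_apply, co_apply, bas_apply, hm]
      by_cases hac : a = c
      · subst hac
        rw [P7eq H a ha, ← bas_idx H (a+1) (a+2), ← bas_idx H a a,
          Module.Basis.repr_self, Module.Basis.repr_self, Finsupp.single_apply, Finsupp.single_apply]
        simp only [idx_eq_iff]
        split_ifs <;> first | rfl | omega | norm_num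
      · rw [P7ne H a c ha hc hac, map_add, Finsupp.add_apply,
          ← bas_idx H (a+1) (c+2),
          ← bas_idx H (a+2) (c+1),
          ← bas_idx H a c,
          Module.Basis.repr_self, Module.Basis.repr_self, Module.Basis.repr_self,
          Finsupp.single_apply, Finsupp.single_apply, Finsupp.single_apply]
        simp only [idx_eq_iff]
        split_ifs <;> first | rfl | omega | norm_num
    · rw [hPj, zero_mul, map_zero, map_zero]
  have := LinearMap.congr_fun hL x
  simp only [LinearMap.comp_apply, LinearMap.mulRight_apply, hx, co_apply] at this
  exact this

end Uniq
section Uniq2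
variable {S : Type} [Ring S] [Algebra ℚ S] (H : AffineSchur22 S)

lemma repr_idx_comm (d : S) (p q : ℤ) :
    (bas H).repr d (idx p q) = (bas H).repr d (idx q p) := by
  congr 1
  exact Subtype.ext (Mat2_comm p q)

lemma coords_vanish (d0 d1 : S) (h0 : d0 ∈ Bset H) (h1 : d1 ∈ Bset H)
    (hrel : d0 * H.e (Mat2 1 1 1 2) + d1 * H.e (Mat2 1 2 1 3) = 0) :
    d0 = 0 ∧ d1 = 0 := by
  have hm : ∀ x y : ℤ, (2:ℤ) ∣ (x-1) → (2:ℤ) ∣ (y-1) →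
      (bas H).repr d0 (idx x y) + (bas H).repr d1 (idx (x-2) y) = 0 := by
    intro x y hx hy
    have h := congrArg (fun v => (bas H).repr v (idx x (y+1))) hrel
    simp only [map_add, Finsupp.add_apply, map_zero, Finsupp.zero_apply] at h
    rw [repr_pi1 H x (y+1) hx (by omega) d0 (mem_B_Pmap H h0),
      repr_pi2 H x (y+1) hx (by omega) d1 (mem_B_Pmap H h1)] at h
    rwa [show (y+1-1 : ℤ) = y by ring] at h
  have hsym : ∀ x y : ℤ, (2:ℤ) ∣ (x-1) → (2:ℤ) ∣ (y-1) →
      (bas H).repr d1 (idx x y) = (bas H).repr d1 (idx (x+2) (y-2)) := by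
    intro x y hx hy
    have e1 := hm (x+2) y (by omega) hy
    rw [show (x+2-2 : ℤ) = x by ring] at e1
    have e2 := hm y (x+2) hy (by omega)
    have e3 : (bas H).repr d0 (idx (x+2) y) = (bas H).repr d0 (idx y (x+2)) :=
      repr_idx_comm H d0 _ _
    have e4 : (bas H).repr d1 (idx (y-2) (x+2)) = (bas H).repr d1 (idx (x+2) (y-2)) :=
      repr_idx_comm H d1 _ _
    linarith
  have hr1 : ∀ a c : ℤ, (2:ℤ) ∣ (a-1) → (2:ℤ) ∣ (c-1) →
      (bas H).repr d1 (idx a c) = 0 := by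
    intro a c ha hc
    by_contra hne
    have horb : ∀ k : ℕ, (bas H).repr d1 (idx (a+2*(k:ℤ)) (c-2*(k:ℤ)))
        = (bas H).repr d1 (idx a c) := by
      intro k
      induction k with
      | zero => norm_num
      | succ k ih =>
          have h := hsym (a+2*(k:ℤ)) (c-2*(k:ℤ)) (by omega) (by omega)
          rw [ih] at h
          rw [show (a+2*((k+1:ℕ):ℤ) : ℤ) = a+2*(k:ℤ)+2 by push_cast; ring,
            show (c-2*((k+1:ℕ):ℤ) : ℤ) = c-2*(k:ℤ)-2 by push_cast; ring]
          exact h.symm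
    have hinj : Function.Injective
        (fun k : ℕ => idx (a+2*((k:ℤ)+((c-a).natAbs+1)))
          (c-2*((k:ℤ)+((c-a).natAbs+1)))) := by
      intro k k' he
      simp only at he
      rcases idx_eq_iff.1 he with ⟨e1, e2⟩ | ⟨e1, e2⟩ <;> omega
    have hmem : ∀ k : ℕ, idx (a+2*((k:ℤ)+((c-a).natAbs+1)))
        (c-2*((k:ℤ)+((c-a).natAbs+1))) ∈ ((bas H).repr d1).support := by
      intro k
      rw [Finsupp.mem_support_iff]
      have h := horb (k + ((c-a).natAbs+1))
      rw [show ((k + ((c-a).natAbs+1) : ℕ) : ℤ) = (k:ℤ)+((c-a).natAbs+1) by push_cast; ring]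
        at h
      rw [h]
      exact hne
    have hinf : (↑((bas H).repr d1).support : Set (ThetaAff 2 2)).Infinite :=
      Set.infinite_of_injective_forall_mem hinj hmem
    exact hinf (Finset.finite_toSet _)
  have hd1 : d1 = 0 := by
    have hz : (bas H).repr d1 = 0 := by
      ext i
      rw [Finsupp.coe_zero, Pi.zero_apply]
      rcases basis_cases H i with ⟨a, c, ha, hc, hmm, _⟩ | hP
      · rw [show i = idx a c from Subtype.ext hmm]
        exact hr1 a c ha hc
      · exact coordW H hP (mem_B_Pmap H h1)
    have := congrArg (bas H).repr.symm hz
    rwa [LinearEquiv.symm_apply_apply, map_zero] at this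
  refine ⟨?_, hd1⟩
  have hq : ∀ a c : ℤ, (2:ℤ) ∣ (a-1) → (2:ℤ) ∣ (c-1) →
      (bas H).repr d0 (idx a c) = 0 := by
    intro a c ha hc
    have h := hm a c ha hc
    rw [hd1] at h
    simp only [map_zero, Finsupp.zero_apply, add_zero] at h
    exact h
  have hz : (bas H).repr d0 = 0 := by
    ext i
    rw [Finsupp.coe_zero, Pi.zero_apply]
    rcases basis_cases H i with ⟨a, c, ha, hc, hmm, _⟩ | hP
    · rw [show i = idx a c from Subtype.ext hmm]
      exact hq a c ha hc
    · exact coordW H hP (mem_B_Pmap H h0)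
  have := congrArg (bas H).repr.symm hz
  rwa [LinearEquiv.symm_apply_apply, map_zero] at this

lemma uniq_core (d : Fin 4 → S) (hd : ∀ i, d i ∈ Bset H)
    (hrel : ∑ i, d i * piVec H i = 0) : ∀ i, d i = 0 := by
  rw [Fin.sum_univ_four, piVec0, piVec1, piVec2, piVec3, ← diag_lam0] at hrel
  have h2 : d 2 = 0 := by
    have e0 := congrArg (fun y => y * H.e (diagM lam0)) hrel
    simp only [add_mul, zero_mul, mul_assoc] at e0
    rw [z_pi1_elam, z_pi2_elam, z_pi4_elam, elam_idem] at e0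
    simp only [mul_zero, add_zero, zero_add] at e0
    rwa [B_right H (hd 2)] at e0
  have h3 : d 3 = 0 := by
    have e0 := congrArg (fun y => y * H.e (Mat2 2 1 2 1)) hrel
    simp only [add_mul, zero_mul, mul_assoc] at e0
    rw [z_pi1_y4, z_pi2_y4, z_elam_y4, P4] at e0
    simp only [mul_zero, add_zero, zero_add] at e0
    rwa [B_right H (hd 3)] at e0
  rw [h2, h3, zero_mul, zero_mul, add_zero, add_zero] at hrel
  obtain ⟨h0, h1⟩ := coords_vanish H (d 0) (d 1) (hd 0) (hd 1) hrel
  intro i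
  fin_cases i <;> assumption

end Uniq2
section Final
variable {S : Type} [Ring S] [Algebra ℚ S] (H : AffineSchur22 S)

lemma tau_e11 : H.tau (H.e (Mat2 1 1 1 1)) = H.e (Mat2 1 1 1 1) := by
  rw [H.tau_e]; congr 1; funext x y
  simp only [Mat2, Edel, cast2]; split_ifs <;> omega

lemma tau_memB {b : S} (hb : b ∈ Bset H) : H.tau b ∈ Bset H := by
  have hbB : H.e (diagM lam0) * b * H.e (diagM lam0) = b := hb
  show H.e (diagM lam0) * H.tau b * H.e (diagM lam0) = H.tau b
  calc H.e (diagM lam0) * H.tau b * H.e (diagM lam0)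
      = H.tau (H.e (diagM lam0) * b * H.e (diagM lam0)) := by
        rw [H.tau_mul, H.tau_mul, tau_elam, ← mul_assoc]
    _ = H.tau b := by rw [hbB]

lemma uniq_left (b c : Fin 4 → S) (hb : ∀ i, b i ∈ Bset H) (hc : ∀ i, c i ∈ Bset H)
    (h : ∑ i, b i * piVec H i = ∑ i, c i * piVec H i) : b = c := by
  have hd : ∀ i, (b i - c i) ∈ Bset H := by
    intro i
    have h1 : H.e (diagM lam0) * b i * H.e (diagM lam0) = b i := hb i
    have h2 : H.e (diagM lam0) * c i * H.e (diagM lam0) = c i := hc i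
    show H.e (diagM lam0) * (b i - c i) * H.e (diagM lam0) = b i - c i
    rw [mul_sub, sub_mul, h1, h2]
  have hrel : ∑ i, (b i - c i) * piVec H i = 0 := by
    have hsplit : ∑ i, (b i - c i) * piVec H i
        = (∑ i, b i * piVec H i) - ∑ i, c i * piVec H i := by
      rw [← Finset.sum_sub_distrib]
      exact Finset.sum_congr rfl fun i _ => sub_mul _ _ _
    rw [hsplit, h, sub_self]
  have hz := uniq_core H _ hd hrel
  funext i
  exact sub_eq_zero.1 (hz i)

lemma tau_piVec (i : Fin 4) :
    H.tau (piVec H i) = ![H.e (Mat2 1 1 2 1), H.e (Mat2 2 1 3 1),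
      H.e (fun x y => 2 * Edel 2 1 1 x y), H.e (fun x y => 2 * Edel 2 2 1 x y)] i := by
  fin_cases i
  · exact tau_pi1 H
  · exact tau_pi2 H
  · show H.tau (piVec H 2) = H.e (fun x y => 2 * Edel 2 1 1 x y)
    rw [piVec2, tau_e11, twoE]
  · show H.tau (piVec H 3) = H.e (fun x y => 2 * Edel 2 2 1 x y)
    rw [piVec3, tau_pi4, twoE]

lemma tau_piVec' (i : Fin 4) :
    H.tau (![H.e (Mat2 1 1 2 1), H.e (Mat2 2 1 3 1),
      H.e (fun x y => 2 * Edel 2 1 1 x y), H.e (fun x y => 2 * Edel 2 2 1 x y)] i)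
      = piVec H i := by
  fin_cases i
  · exact tau_pi1' H
  · exact tau_pi2' H
  · show H.tau (H.e (fun x y => 2 * Edel 2 1 1 x y)) = piVec H 2
    rw [twoE, tau_e11, piVec2]
  · show H.tau (H.e (fun x y => 2 * Edel 2 2 1 x y)) = piVec H 3
    rw [twoE, tau_pi4', piVec3]

end Final
end AuxSec


/-- Lemma 4.4 of the paper. In `S△(2,2)` over `ℚ` at `q = 1`, with
`λ = (2,0)` and `B = e_λ S△(2,2) e_λ`, the `B`-module `e_λ S△(2,2) = {x | e_λ x = x}` is
free of rank `4` with basis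
`Π₁ = {e_{E△_{1,1}+E△_{1,2}}, e_{E△_{1,2}+E△_{1,3}}, e_{2E△_{1,1}}, e_{2E△_{1,2}}}`
(every element has a unique expansion `Σᵢ bᵢ πᵢ` with `bᵢ ∈ B`), and similarly
`S△(2,2) e_λ = {x | x e_λ = x}` is free of rank `4` as a `B`-module with basis
`Π₂ = {e_{E△_{1,1}+E△_{2,1}}, e_{E△_{2,1}+E△_{3,1}}, e_{2E△_{1,1}}, e_{2E△_{2,1}}}`. -/
theorem corner_modules_free_rank_four (S : Type) [Ring S] [Algebra ℚ S]
    (H : AffineSchur22 S) :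
    (∀ x : S, H.e (diagM lam0) * x = x →
      ∃ b : Fin 4 → S, (∀ i, H.e (diagM lam0) * b i * H.e (diagM lam0) = b i) ∧
        x = ∑ i, b i * ![H.e (Mat2 1 1 1 2), H.e (Mat2 1 2 1 3),
              H.e (fun x y => 2 * Edel 2 1 1 x y), H.e (fun x y => 2 * Edel 2 1 2 x y)] i) ∧
    (∀ b c : Fin 4 → S, (∀ i, H.e (diagM lam0) * b i * H.e (diagM lam0) = b i) →
      (∀ i, H.e (diagM lam0) * c i * H.e (diagM lam0) = c i) →
      (∑ i, b i * ![H.e (Mat2 1 1 1 2), H.e (Mat2 1 2 1 3),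
          H.e (fun x y => 2 * Edel 2 1 1 x y), H.e (fun x y => 2 * Edel 2 1 2 x y)] i) =
      (∑ i, c i * ![H.e (Mat2 1 1 1 2), H.e (Mat2 1 2 1 3),
          H.e (fun x y => 2 * Edel 2 1 1 x y), H.e (fun x y => 2 * Edel 2 1 2 x y)] i) →
      b = c) ∧
    (∀ x : S, x * H.e (diagM lam0) = x →
      ∃ b : Fin 4 → S, (∀ i, H.e (diagM lam0) * b i * H.e (diagM lam0) = b i) ∧
        x = ∑ i, ![H.e (Mat2 1 1 2 1), H.e (Mat2 2 1 3 1),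
              H.e (fun x y => 2 * Edel 2 1 1 x y),
              H.e (fun x y => 2 * Edel 2 2 1 x y)] i * b i) ∧
    (∀ b c : Fin 4 → S, (∀ i, H.e (diagM lam0) * b i * H.e (diagM lam0) = b i) →
      (∀ i, H.e (diagM lam0) * c i * H.e (diagM lam0) = c i) →
      (∑ i, ![H.e (Mat2 1 1 2 1), H.e (Mat2 2 1 3 1),
          H.e (fun x y => 2 * Edel 2 1 1 x y),
          H.e (fun x y => 2 * Edel 2 2 1 x y)] i * b i) =
      (∑ i, ![H.e (Mat2 1 1 2 1), H.e (Mat2 2 1 3 1),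
          H.e (fun x y => 2 * Edel 2 1 1 x y),
          H.e (fun x y => 2 * Edel 2 2 1 x y)] i * c i) →
      b = c) := by
  constructor
  · -- existence, left module
    intro x hx
    obtain ⟨b, hb, hx2⟩ := exist_left H x hx
    exact ⟨b, hb, hx2⟩
  constructor
  · -- uniqueness, left module
    intro b c hb hc heq
    exact uniq_left H b c hb hc heq
  constructor
  · -- existence, right module
    intro x hx
    have hτ : H.e (diagM lam0) * H.tau x = H.tau x := by
      have h := congrArg H.tau hx
      rwa [H.tau_mul, tau_elam] at h
    obtain ⟨b, hb, hx2⟩ := exist_left H (H.tau x) hτ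
    refine ⟨fun i => H.tau (b i), fun i => tau_memB H (hb i), ?_⟩
    have hx3 := congrArg H.tau hx2
    rw [H.tau_invol, map_sum] at hx3
    rw [hx3]
    refine Finset.sum_congr rfl fun i _ => ?_
    rw [H.tau_mul, tau_piVec]
  · -- uniqueness, right module
    intro b c hb hc heq
    have h := congrArg H.tau heq
    rw [map_sum, map_sum] at h
    have hconv : ∀ b' : Fin 4 → S,
        (∑ i, H.tau (![H.e (Mat2 1 1 2 1), H.e (Mat2 2 1 3 1),
          H.e (fun x y => 2 * Edel 2 1 1 x y),
          H.e (fun x y => 2 * Edel 2 2 1 x y)] i * b' i))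
        = ∑ i, H.tau (b' i) * piVec H i := by
      intro b'
      refine Finset.sum_congr rfl fun i _ => ?_
      rw [H.tau_mul, tau_piVec']
    rw [hconv b, hconv c] at h
    have := uniq_left H (fun i => H.tau (b i)) (fun i => H.tau (c i))
      (fun i => tau_memB H (hb i)) (fun i => tau_memB H (hc i)) h
    funext i
    have hi := congrFun this i
    have := congrArg H.tau hi
    rwa [H.tau_invol, H.tau_invol] at this
end

section
/- Let R be a ring, e ∈ R an idempotent, and B = eRe. If Re is a free right B-module with finite basis and eR is a free left B-module with finite basis, and the multiplication map Re ⊗_B eR → ReR is injective, then ReR ≅ Re ⊗_B eR as R-bimodules and ReR is projective both as a left R-module and as a right R-module. -/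
open MulOpposite Finset

/-- Let `R` be a ring, `e` an idempotent, `B = eRe` the corner ring.
Suppose `Re` is a free `B`-module with finite basis `v` (unique expansions
`x = Σᵢ vᵢ bᵢ`, `bᵢ ∈ B`), `eR` is a free `B`-module with finite basis `w` (unique
expansions `x = Σⱼ bⱼ wⱼ`), and the multiplication map `Re ⊗_B eR → ReR` is injective
(no nontrivial relation `Σᵢⱼ vᵢ fᵢⱼ wⱼ = 0` with `fᵢⱼ ∈ B`).  Then the multiplication
map is an isomorphism of `R`-bimodules `Re ⊗_B eR ≅ ReR` — every element of `ReR` has a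
(then unique) expansion `Σᵢⱼ vᵢ fᵢⱼ wⱼ` — and `ReR` is projective both as a left
`R`-module and as a right `R`-module. -/
theorem corner_free_mult_injective_implies_iso_and_projective
    (R : Type) [Ring R] (e : R) (he : e * e = e) (m n : ℕ)
    (v : Fin m → R) (w : Fin n → R)
    (hv_mem : ∀ i, v i * e = v i) (hw_mem : ∀ j, e * w j = w j)
    (hv_span : ∀ x : R, x * e = x →
      ∃ b : Fin m → R, (∀ i, e * b i * e = b i) ∧ x = ∑ i, v i * b i)
    (hv_indep : ∀ b c : Fin m → R, (∀ i, e * b i * e = b i) → (∀ i, e * c i * e = c i) →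
      (∑ i, v i * b i) = ∑ i, v i * c i → b = c)
    (hw_span : ∀ x : R, e * x = x →
      ∃ b : Fin n → R, (∀ j, e * b j * e = b j) ∧ x = ∑ j, b j * w j)
    (hw_indep : ∀ b c : Fin n → R, (∀ j, e * b j * e = b j) → (∀ j, e * c j * e = c j) →
      (∑ j, b j * w j) = ∑ j, c j * w j → b = c)
    (hinj : ∀ f : Fin m → Fin n → R, (∀ i j, e * f i j * e = f i j) →
      (∑ i, ∑ j, v i * f i j * w j) = 0 → ∀ i j, f i j = 0) :
    (∀ x ∈ Ideal.span {x : R | ∃ a b : R, x = a * e * b},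
      ∃ f : Fin m → Fin n → R, (∀ i j, e * f i j * e = f i j) ∧
        x = ∑ i, ∑ j, v i * f i j * w j) ∧
    Module.Projective R (Ideal.span {x : R | ∃ a b : R, x = a * e * b}) ∧
    Module.Projective Rᵐᵒᵖ
      (Ideal.span {x : Rᵐᵒᵖ | ∃ a b : R, x = MulOpposite.op (a * e * b)}) := by
  -- basic corner facts
  have hBe : ∀ {b : R}, e * b * e = b → b * e = b := by
    intro b h
    calc b * e = e * b * e * e := by rw [h]
      _ = e * b * (e * e) := by rw [mul_assoc]
      _ = e * b * e := by rw [he]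
      _ = b := h
  have heB : ∀ {b : R}, e * b * e = b → e * b = b := by
    intro b h
    calc e * b = e * (e * b * e) := by rw [h]
      _ = e * e * b * e := by rw [← mul_assoc, ← mul_assoc]
      _ = e * b * e := by rw [he]
      _ = b := h
  -- existence of right-coefficient expansions on the ideal
  have hP : ∀ x ∈ Ideal.span {x : R | ∃ a b : R, x = a * e * b},
      ∃ c : Fin n → R, (∀ j, c j * e = c j) ∧ x = ∑ j, c j * w j := by
    intro x hx
    induction hx using Submodule.span_induction with
    | mem x hx =>
      obtain ⟨a, b, rfl⟩ := hx
      obtain ⟨c, hcB, hcb⟩ := hw_span (e * b) (by rw [← mul_assoc, he])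
      refine ⟨fun j => a * c j, fun j => by rw [mul_assoc, hBe (hcB j)], ?_⟩
      rw [mul_assoc, hcb, Finset.mul_sum]
      simp [mul_assoc]
    | zero => exact ⟨0, by simp, by simp⟩
    | add x y hx hy ihx ihy =>
      obtain ⟨c, hc, hcx⟩ := ihx
      obtain ⟨d, hd, hdy⟩ := ihy
      exact ⟨c + d, fun j => by simp [add_mul, hc j, hd j],
        by simp [add_mul, Finset.sum_add_distrib, ← hcx, ← hdy]⟩
    | smul r x hx ihx =>
      obtain ⟨c, hc, hcx⟩ := ihx
      refine ⟨fun j => r * c j, fun j => by rw [mul_assoc, hc j], ?_⟩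
      simp only [smul_eq_mul, hcx, Finset.mul_sum, mul_assoc]
  -- uniqueness of right-coefficient expansions
  have huniq : ∀ c c' : Fin n → R, (∀ j, c j * e = c j) → (∀ j, c' j * e = c' j) →
      (∑ j, c j * w j) = ∑ j, c' j * w j → c = c' := by
    intro c c' hc hc' hsum
    have hd : ∀ j, (c j - c' j) * e = c j - c' j := fun j => by
      rw [sub_mul, hc j, hc' j]
    choose f hfB hfe using fun j => hv_span (c j - c' j) (hd j)
    have h0 : (∑ i, ∑ j, v i * f j i * w j) = 0 := by
      rw [Finset.sum_comm]
      have : ∀ j, (∑ i, v i * f j i * w j) = (c j - c' j) * w j := fun j => by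
        rw [hfe j, Finset.sum_mul]
      simp only [this]
      simp [sub_mul, Finset.sum_sub_distrib, hsum]
    have hz := hinj (fun i j => f j i) (fun i j => hfB j i) h0
    funext j
    have : c j - c' j = 0 := by
      rw [hfe j]
      simp [show ∀ i, f j i = 0 from fun i => hz i j]
    exact sub_eq_zero.mp this
  -- existence of left-coefficient expansions on the opposite ideal
  have hP' : ∀ y ∈ Ideal.span {x : Rᵐᵒᵖ | ∃ a b : R, x = MulOpposite.op (a * e * b)},
      ∃ c : Fin m → R, (∀ i, e * c i = c i) ∧ MulOpposite.unop y = ∑ i, v i * c i := by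
    intro y hy
    induction hy using Submodule.span_induction with
    | mem y hy =>
      obtain ⟨a, b, rfl⟩ := hy
      obtain ⟨d, hdB, hde⟩ := hv_span (a * e) (by rw [mul_assoc, he])
      refine ⟨fun i => d i * b, fun i => by rw [← mul_assoc, heB (hdB i)], ?_⟩
      rw [MulOpposite.unop_op, show a * e * b = (a * e) * b from rfl, hde, Finset.sum_mul]
      simp [mul_assoc]
    | zero => exact ⟨0, by simp, by simp⟩
    | add x y hx hy ihx ihy =>
      obtain ⟨c, hc, hcx⟩ := ihx
      obtain ⟨d, hd, hdy⟩ := ihy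
      exact ⟨c + d, fun i => by simp [mul_add, hc i, hd i],
        by simp [mul_add, Finset.sum_add_distrib, ← hcx, ← hdy]⟩
    | smul r x hx ihx =>
      obtain ⟨c, hc, hcx⟩ := ihx
      refine ⟨fun i => c i * r.unop, fun i => by rw [← mul_assoc, hc i], ?_⟩
      have : (r • x).unop = x.unop * r.unop := rfl
      rw [this, hcx, Finset.sum_mul]
      simp [mul_assoc]
  -- uniqueness of left-coefficient expansions
  have huniq' : ∀ c c' : Fin m → R, (∀ i, e * c i = c i) → (∀ i, e * c' i = c' i) →
      (∑ i, v i * c i) = ∑ i, v i * c' i → c = c' := by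
    intro c c' hc hc' hsum
    have hd : ∀ i, e * (c i - c' i) = c i - c' i := fun i => by
      rw [mul_sub, hc i, hc' i]
    choose f hfB hfe using fun i => hw_span (c i - c' i) (hd i)
    have h0 : (∑ i, ∑ j, v i * f i j * w j) = 0 := by
      have : ∀ i, (∑ j, v i * f i j * w j) = v i * (c i - c' i) := fun i => by
        rw [hfe i, Finset.mul_sum]
        simp [mul_assoc]
      simp only [this]
      simp [mul_sub, Finset.sum_sub_distrib, hsum]
    have hz := hinj f hfB h0
    funext i
    have : c i - c' i = 0 := by
      rw [hfe i]
      simp [show ∀ j, f i j = 0 from fun j => hz i j]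
    exact sub_eq_zero.mp this
  refine ⟨?_, ?_, ?_⟩
  · -- part 1: expansion with B-coefficients
    intro x hx
    obtain ⟨c, hc, hcx⟩ := hP x hx
    choose f hfB hfe using fun j => hv_span (c j) (hc j)
    refine ⟨fun i j => f j i, fun i j => hfB j i, ?_⟩
    rw [hcx, Finset.sum_comm]
    exact Finset.sum_congr rfl fun j _ => by rw [hfe j, Finset.sum_mul]
  · -- part 2: left projectivity
    set I := Ideal.span {x : R | ∃ a b : R, x = a * e * b} with hIdef
    let c : I → Fin n → R := fun x => (hP x.1 x.2).choose
    have hc1 : ∀ x : I, ∀ j, c x j * e = c x j := fun x => (hP x.1 x.2).choose_spec.1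
    have hc2 : ∀ x : I, (x : R) = ∑ j, c x j * w j := fun x => (hP x.1 x.2).choose_spec.2
    let σ : I →ₗ[R] (Fin n → R) :=
      { toFun := c
        map_add' := fun x y => by
          refine huniq _ _ (hc1 _) (fun j => by simp [add_mul, hc1 x j, hc1 y j]) ?_
          calc ∑ j, c (x + y) j * w j = ((x + y : I) : R) := (hc2 _).symm
            _ = (x : R) + (y : R) := rfl
            _ = (∑ j, c x j * w j) + ∑ j, c y j * w j := by rw [← hc2, ← hc2]
            _ = ∑ j, (c x + c y) j * w j := by
                simp [add_mul, Finset.sum_add_distrib]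
        map_smul' := fun r x => by
          refine huniq _ _ (hc1 _) (fun j => by simp [mul_assoc, hc1 x j]) ?_
          calc ∑ j, c (r • x) j * w j = ((r • x : I) : R) := (hc2 _).symm
            _ = r * (x : R) := rfl
            _ = r * ∑ j, c x j * w j := by rw [← hc2]
            _ = ∑ j, (r • c x) j * w j := by
                simp [Finset.mul_sum, mul_assoc] }
    let ψ : (Fin n → R) →ₗ[R] I :=
      { toFun := fun d => ⟨∑ j, d j * e * w j,
          Ideal.sum_mem _ fun j _ => Ideal.subset_span ⟨d j, w j, rfl⟩⟩
        map_add' := fun a b => Subtype.ext (by simp [add_mul, Finset.sum_add_distrib])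
        map_smul' := fun r a => Subtype.ext (by simp [Finset.mul_sum, mul_assoc]) }
    refine Module.Projective.of_split σ ψ ?_
    ext x
    show ∑ j, c x j * e * w j = (x : R)
    simp only [hc1 x]
    exact (hc2 x).symm
  · -- part 3: right projectivity
    set I' := Ideal.span {x : Rᵐᵒᵖ | ∃ a b : R, x = MulOpposite.op (a * e * b)} with hI'def
    let c : I' → Fin m → R := fun y => (hP' y.1 y.2).choose
    have hc1 : ∀ y : I', ∀ i, e * c y i = c y i := fun y => (hP' y.1 y.2).choose_spec.1
    have hc2 : ∀ y : I', (y : Rᵐᵒᵖ).unop = ∑ i, v i * c y i :=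
      fun y => (hP' y.1 y.2).choose_spec.2
    let σ : I' →ₗ[Rᵐᵒᵖ] (Fin m → Rᵐᵒᵖ) :=
      { toFun := fun y i => MulOpposite.op (c y i)
        map_add' := fun x y => by
          have key : c (x + y) = fun i => c x i + c y i := by
            refine huniq' _ _ (hc1 _) (fun i => by simp [mul_add, hc1 x i, hc1 y i]) ?_
            calc ∑ i, v i * c (x + y) i = ((x + y : I') : Rᵐᵒᵖ).unop := (hc2 _).symm
              _ = (x : Rᵐᵒᵖ).unop + (y : Rᵐᵒᵖ).unop := rfl
              _ = (∑ i, v i * c x i) + ∑ i, v i * c y i := by rw [← hc2, ← hc2]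
              _ = ∑ i, v i * (c x i + c y i) := by
                  simp [mul_add, Finset.sum_add_distrib]
          funext i
          simp [key]
        map_smul' := fun r y => by
          have key : c (r • y) = fun i => c y i * r.unop := by
            refine huniq' _ _ (hc1 _) (fun i => by rw [← mul_assoc, hc1 y i]) ?_
            calc ∑ i, v i * c (r • y) i = ((r • y : I') : Rᵐᵒᵖ).unop := (hc2 _).symm
              _ = (y : Rᵐᵒᵖ).unop * r.unop := rfl
              _ = (∑ i, v i * c y i) * r.unop := by rw [← hc2]
              _ = ∑ i, v i * (c y i * r.unop) := by
                  rw [Finset.sum_mul]; simp [mul_assoc]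
          funext i
          simp [key, MulOpposite.op_mul]
        }
    let ψ : (Fin m → Rᵐᵒᵖ) →ₗ[Rᵐᵒᵖ] I' :=
      { toFun := fun d => ⟨∑ i, d i * MulOpposite.op (v i * e),
          Ideal.sum_mem _ fun i _ => Ideal.subset_span
            ⟨v i, (d i).unop, by
              rw [MulOpposite.op_mul (v i * e) (MulOpposite.unop (d i)), MulOpposite.op_unop]⟩⟩
        map_add' := fun a b => Subtype.ext (by simp [add_mul, Finset.sum_add_distrib])
        map_smul' := fun r a => Subtype.ext (by simp [Finset.mul_sum, mul_assoc]) }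
    refine Module.Projective.of_split σ ψ ?_
    ext y
    refine MulOpposite.unop_injective ?_
    show (∑ i, MulOpposite.op (c y i) * MulOpposite.op (v i * e)).unop = ((y : Rᵐᵒᵖ)).unop
    rw [Finset.unop_sum, hc2 y]
    refine Finset.sum_congr rfl fun i _ => ?_
    show v i * e * c y i = v i * c y i
    rw [mul_assoc, hc1 y i]
end
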